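/- arXiv:2311.10593 — 7 statements merged into one kernel-verified Lean document; each statement's English description precedes it below -/
import Mathlib

section
/- For every (possibly disconnected) finite simple graph G, k(G) ≤ p(G). -/
/- Definitions following "Generation and New Infinite Families of K₂-hypohamiltonian Graphs"
by Goedgebeur, Renders and Zamfirescu. -/

open scoped Classical

noncomputable section

namespace K2HypoPaper

variable {V : Type}

/-- A graph is *hamiltonian* if it contains a cycle passing through every vertex exactly once. -/
def IsHamiltonianGraph (G : SimpleGraph V) : Prop :=
  ∃ (a : V) (p : G.Walk a a), p.IsHamiltonianCycle

/-- A graph is *K₂-hamiltonian* if deleting the two endpoints of any edge yields a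
hamiltonian graph. -/
def IsK2Hamiltonian (G : SimpleGraph V) : Prop :=
  ∀ u v : V, G.Adj u v → IsHamiltonianGraph (G.induce {x : V | x ≠ u ∧ x ≠ v})

/-- A graph is *hypohamiltonian* if it is non-hamiltonian and every vertex-deleted
subgraph is hamiltonian. -/
def IsHypohamiltonian (G : SimpleGraph V) : Prop :=
  ¬ IsHamiltonianGraph G ∧ ∀ v : V, IsHamiltonianGraph (G.induce {x : V | x ≠ v})

/-- A graph is *K₂-hypohamiltonian* if it is non-hamiltonian and K₂-hamiltonian. -/
def IsK2Hypohamiltonian (G : SimpleGraph V) : Prop :=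
  ¬ IsHamiltonianGraph G ∧ IsK2Hamiltonian G

/-- A family of `n` pairwise vertex-disjoint paths covering all the vertices of `G`. -/
def IsPathCover {n : ℕ} (G : SimpleGraph V) (P : Fin n → (u : V) × (v : V) × G.Walk u v) : Prop :=
  (∀ i, (P i).2.2.IsPath) ∧
  (∀ i j, i ≠ j → ∀ x, x ∈ (P i).2.2.support → x ∉ (P j).2.2.support) ∧
  (∀ x : V, ∃ i, x ∈ (P i).2.2.support)

/-- `p(G)`: the minimum number of pairwise vertex-disjoint paths needed to cover all
vertices of `G`. -/
def pathCoverNumber (G : SimpleGraph V) : ℕ :=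
  sInf {n : ℕ | ∃ P : Fin n → (u : V) × (v : V) × G.Walk u v, IsPathCover G P}

/-- The vertices lying in components of `G` that are isolated vertices or isolated `K₂`'s
(a component of a simple graph has at most two vertices iff it is an isolated vertex or an
isolated edge together with its endpoints). -/
def IVerts (G : SimpleGraph V) : Set V :=
  {v : V | (G.connectedComponentMk v).supp.ncard ≤ 2}

/-- `|I(G)|`: the number of components of `G` that are isolated vertices or isolated `K₂`'s. -/
def numIComponents (G : SimpleGraph V) : ℕ :=
  {c : G.ConnectedComponent | c.supp.ncard ≤ 2}.ncard

/-- `|V₁(G)|`: the number of vertices of degree `1` in `G`. -/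
def degOneCount (G : SimpleGraph V) : ℕ :=
  {v : V | (G.neighborSet v).ncard = 1}.ncard

/-- Fuel-based implementation of the recursive definition of `k(G)`:
`k(G) = 0` if `G` is empty; `k(G) = max {1, ⌈|V₁(G)|/2⌉}` if `I(G) = ∅` but `G` is nonempty;
and `k(G) = |I(G)| + k(G − I(G))` otherwise. -/
def kAux : ℕ → (W : Type) → SimpleGraph W → ℕ
  | 0, _, _ => 0
  | (m + 1), W, G =>
    if IsEmpty W then 0
    else if IVerts G = ∅ then max 1 ((degOneCount G + 1) / 2)
    else numIComponents G + kAux m ↥((IVerts G)ᶜ) (G.induce ((IVerts G)ᶜ))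

/-- `k(G)` (the fuel `Fintype.card V` always suffices for the recursion to bottom out,
since removing the small components once leaves a graph with `I = ∅`). -/
def kNum [Fintype V] (G : SimpleGraph V) : ℕ := kAux (Fintype.card V) V G

/-! ### Auxiliary lemmas for the proof -/

open SimpleGraph

/-- Every vertex on a walk lies in the same connected component as the start. -/
lemma comp_eq_of_mem_support {G : SimpleGraph V} {a b x : V} (w : G.Walk a b)
    (hx : x ∈ w.support) :
    G.connectedComponentMk x = G.connectedComponentMk a :=
  (ConnectedComponent.sound ⟨w.takeUntil x hx⟩).symm

lemma mem_IVerts_iff_of_mem_support {G : SimpleGraph V} {a b x : V} (w : G.Walk a b)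
    (hx : x ∈ w.support) : x ∈ IVerts G ↔ a ∈ IVerts G := by
  unfold IVerts
  simp only [Set.mem_setOf_eq, comp_eq_of_mem_support w hx]

/-- An interior vertex of a path has two distinct neighbours. -/
lemma exists_two_neighbors {G : SimpleGraph V} {a b : V} (w : G.Walk a b) (hw : w.IsPath)
    {x : V} (hx : x ∈ w.support) (hxa : x ≠ a) (hxb : x ≠ b) :
    ∃ y z, y ≠ z ∧ G.Adj x y ∧ G.Adj x z := by
  induction w with
  | nil =>
    simp only [SimpleGraph.Walk.support_nil, List.mem_singleton] at hx
    exact absurd hx hxa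
  | @cons u c b h p ih =>
    have hx' : x ∈ p.support := by
      simpa [hxa] using hx
    by_cases hxc : x = c
    · subst hxc
      cases p with
      | nil => exact absurd rfl hxb
      | @cons _ d _ h' p' =>
        refine ⟨u, d, ?_, h.symm, h'⟩
        intro hud
        have hu : u ∉ (SimpleGraph.Walk.cons h' p').support :=
          ((SimpleGraph.Walk.cons_isPath_iff _ _).mp hw).2
        apply hu
        rw [hud]
        exact List.mem_cons_of_mem _ p'.start_mem_support
    · exact ih hw.of_cons hx' hxc hxb

/-- Transfer a walk to an induced subgraph on a set containing its support. -/
def walkToInduce {G : SimpleGraph V} {s : Set V} :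
    {u v : V} → (w : G.Walk u v) → (h : ∀ x ∈ w.support, x ∈ s) →
      (G.induce s).Walk ⟨u, h u w.start_mem_support⟩ ⟨v, h v w.end_mem_support⟩
  | _, _, SimpleGraph.Walk.nil, _ => SimpleGraph.Walk.nil
  | _, _, SimpleGraph.Walk.cons a p, h =>
      SimpleGraph.Walk.cons (by exact a)
        (walkToInduce p (fun x hx => h x (List.mem_cons_of_mem _ hx)))

lemma walkToInduce_support {G : SimpleGraph V} {s : Set V} :
    ∀ {u v : V} (w : G.Walk u v) (h : ∀ x ∈ w.support, x ∈ s),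
      (walkToInduce w h).support.map Subtype.val = w.support
  | _, _, SimpleGraph.Walk.nil, _ => rfl
  | _, _, SimpleGraph.Walk.cons a p, h => by
      simp only [walkToInduce, SimpleGraph.Walk.support_cons, List.map_cons,
        walkToInduce_support p]
      exact congrArg (List.cons _) (walkToInduce_support p _)

lemma mem_walkToInduce_support {G : SimpleGraph V} {s : Set V} {u v : V} (w : G.Walk u v)
    (h : ∀ x ∈ w.support, x ∈ s) (x : s) :
    x ∈ (walkToInduce w h).support ↔ (x : V) ∈ w.support := by
  rw [← walkToInduce_support w h, List.mem_map]
  constructor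
  · rintro hx
    exact ⟨x, hx, rfl⟩
  · rintro ⟨y, hy, hyx⟩
    rwa [show y = x from Subtype.ext hyx] at hy

lemma walkToInduce_isPath {G : SimpleGraph V} {s : Set V} {u v : V} (w : G.Walk u v)
    (h : ∀ x ∈ w.support, x ∈ s) (hw : w.IsPath) : (walkToInduce w h).IsPath := by
  rw [SimpleGraph.Walk.isPath_def]
  have := hw.support_nodup
  rw [← walkToInduce_support w h] at this
  exact this.of_map _

/-- A path cover of the expected minimum size exists. -/
lemma exists_min_cover [Fintype V] (G : SimpleGraph V) :
    ∃ P : Fin (pathCoverNumber G) → (u : V) × (v : V) × G.Walk u v, IsPathCover G P := by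
  have hmem : Fintype.card V ∈ {n : ℕ | ∃ P : Fin n → (u : V) × (v : V) × G.Walk u v,
      IsPathCover G P} := by
    refine ⟨fun i => ⟨(Fintype.equivFin V).symm i, (Fintype.equivFin V).symm i,
      SimpleGraph.Walk.nil⟩, ?_, ?_, ?_⟩
    · intro i; exact SimpleGraph.Walk.IsPath.nil
    · intro i j hij x hxi hxj
      simp only [SimpleGraph.Walk.support_nil, List.mem_singleton] at hxi hxj
      exact hij (((Fintype.equivFin V).symm.injective) (hxi ▸ hxj ▸ rfl))
    · intro x
      exact ⟨Fintype.equivFin V x, by simp⟩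
  exact Nat.sInf_mem ⟨_, hmem⟩

lemma one_le_pathCoverNumber [Fintype V] (G : SimpleGraph V) [Nonempty V] :
    1 ≤ pathCoverNumber G := by
  obtain ⟨P, hP⟩ := exists_min_cover G
  obtain ⟨i, -⟩ := hP.2.2 (Classical.arbitrary V)
  exact i.pos

/-- Each path contains at most two vertices of degree one, whence the bound. -/
lemma degOneCount_le [Fintype V] (G : SimpleGraph V) :
    degOneCount G ≤ 2 * pathCoverNumber G := by
  set n := pathCoverNumber G with hn
  obtain ⟨P, hP⟩ := exists_min_cover G
  have hsub : {v : V | (G.neighborSet v).ncard = 1} ⊆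
      Set.range (fun q : Fin n × Bool => if q.2 then (P q.1).1 else (P q.1).2.1) := by
    intro v hv
    obtain ⟨i, hi⟩ := hP.2.2 v
    by_cases h1 : v = (P i).1
    · exact ⟨(i, true), h1.symm⟩
    by_cases h2 : v = (P i).2.1
    · exact ⟨(i, false), h2.symm⟩
    obtain ⟨y, z, hyz, hy, hz⟩ := exists_two_neighbors (P i).2.2 (hP.1 i) hi h1 h2
    obtain ⟨w, hw⟩ := Set.ncard_eq_one.mp hv
    have hyw : y = w := by
      have : y ∈ G.neighborSet v := hy
      rwa [hw, Set.mem_singleton_iff] at this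
    have hzw : z = w := by
      have : z ∈ G.neighborSet v := hz
      rwa [hw, Set.mem_singleton_iff] at this
    exact absurd (hyw.trans hzw.symm) hyz
  calc degOneCount G ≤ (Set.range (fun q : Fin n × Bool =>
        if q.2 then (P q.1).1 else (P q.1).2.1)).ncard :=
        Set.ncard_le_ncard hsub (Set.toFinite _)
    _ ≤ Nat.card (Fin n × Bool) := by
        rw [← Set.image_univ]
        calc ((fun q : Fin n × Bool => if q.2 then (P q.1).1 else (P q.1).2.1) ''
              Set.univ).ncard ≤ (Set.univ : Set (Fin n × Bool)).ncard :=
              Set.ncard_image_le Set.finite_univ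
          _ = Nat.card (Fin n × Bool) := Set.ncard_univ _
    _ = 2 * n := by simp [Nat.card_eq_fintype_card, mul_comm]

/-- The key splitting inequality. -/
lemma split_bound [Fintype V] (G : SimpleGraph V) :
    numIComponents G + pathCoverNumber (G.induce ((IVerts G)ᶜ)) ≤ pathCoverNumber G := by
  set n := pathCoverNumber G with hn
  obtain ⟨P, hP⟩ := exists_min_cover G
  classical
  set C : Finset (Fin n) := Finset.univ.filter (fun i => (P i).1 ∈ IVerts G) with hC
  -- Step 1 : numIComponents G ≤ C.card
  have step1 : numIComponents G ≤ C.card := by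
    have hrep : ∀ c : {c : G.ConnectedComponent // c.supp.ncard ≤ 2},
        ∃ i : Fin n, i ∈ C ∧ G.connectedComponentMk (P i).1 = c.1 := by
      rintro ⟨c, hc⟩
      obtain ⟨v, hv⟩ := c.exists_rep
      obtain ⟨i, hi⟩ := hP.2.2 v
      have hcomp : G.connectedComponentMk (P i).1 = c := by
        rw [← hv]
        exact (comp_eq_of_mem_support (P i).2.2 hi).symm
      refine ⟨i, ?_, hcomp⟩
      simp only [hC, Finset.mem_filter, Finset.mem_univ, true_and]
      show (G.connectedComponentMk (P i).1).supp.ncard ≤ 2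
      rw [hcomp]; exact hc
    choose f hfC hfc using hrep
    have hinj : Function.Injective f := by
      intro c c' hcc
      have := (hfc c).symm.trans (hcc ▸ hfc c')
      exact Subtype.ext this
    have h1 : numIComponents G = Nat.card {c : G.ConnectedComponent // c.supp.ncard ≤ 2} := by
      rw [numIComponents, ← Nat.card_coe_set_eq]
      rfl
    have h2 : Nat.card {c : G.ConnectedComponent // c.supp.ncard ≤ 2} ≤ Nat.card ↥C := by
      refine Nat.card_le_card_of_injective (fun c => ⟨f c, hfC c⟩) ?_
      intro c c' h
      exact hinj (by simpa using h)
    rw [h1]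
    simpa [Nat.card_eq_fintype_card] using h2
  -- Step 2 : pathCoverNumber of the induced graph is at most Cᶜ.card
  have step2 : pathCoverNumber (G.induce ((IVerts G)ᶜ)) ≤ Cᶜ.card := by
    have hC' : ∀ i : Fin n, i ∉ C → ∀ x ∈ (P i).2.2.support, x ∈ (IVerts G)ᶜ := by
      intro i hi x hx
      simp only [hC, Finset.mem_filter, Finset.mem_univ, true_and] at hi
      intro hmem
      exact hi ((mem_IVerts_iff_of_mem_support (P i).2.2 hx).mp hmem)
    set e : Fin Cᶜ.card ≃ ↥(Cᶜ : Finset (Fin n)) := (Cᶜ.equivFin).symm with he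
    refine Nat.sInf_le ⟨fun j => ⟨_, _, walkToInduce (P (e j).1).2.2
      (hC' (e j).1 (Finset.mem_compl.mp (e j).2))⟩, ?_, ?_, ?_⟩
    · intro j
      exact walkToInduce_isPath _ _ (hP.1 _)
    · intro j j' hjj x hxj hxj'
      have hne : (e j).1 ≠ (e j').1 := by
        intro hval
        exact hjj (e.injective (Subtype.ext hval))
      rw [mem_walkToInduce_support] at hxj hxj'
      exact hP.2.1 _ _ hne _ hxj hxj'
    · intro x
      obtain ⟨i, hi⟩ := hP.2.2 (x : V)
      have hiC : i ∈ Cᶜ := by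
        simp only [Finset.mem_compl, hC, Finset.mem_filter, Finset.mem_univ, true_and]
        intro hmem
        exact x.2 ((mem_IVerts_iff_of_mem_support (P i).2.2 hi).mpr hmem)
      refine ⟨e.symm ⟨i, hiC⟩, ?_⟩
      rw [mem_walkToInduce_support, Equiv.apply_symm_apply]
      exact hi
  have hsum : C.card + Cᶜ.card = n := (Finset.card_add_card_compl C).trans (Fintype.card_fin n)
  omega

/-- Fuel-indexed main bound. -/
lemma kAux_le : ∀ (m : ℕ) (W : Type) [Fintype W] (G : SimpleGraph W),
    Fintype.card W ≤ m → kAux m W G ≤ pathCoverNumber G := by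
  intro m
  induction m with
  | zero =>
    intro W _ G _
    simp [kAux]
  | succ m ih =>
    intro W _ G hcard
    rw [kAux]
    split
    · exact Nat.zero_le _
    next hW =>
      have : Nonempty W := not_isEmpty_iff.mp hW
      split
      next hI =>
        rw [max_le_iff]
        refine ⟨one_le_pathCoverNumber G, ?_⟩
        have := degOneCount_le G
        omega
      next hI =>
        obtain ⟨v, hv⟩ := Set.nonempty_iff_ne_empty.mpr hI
        have hlt : Fintype.card ↥((IVerts G)ᶜ) < Fintype.card W :=
          Fintype.card_subtype_lt (x := v) (by simp [hv])
        calc numIComponents G + kAux m ↥((IVerts G)ᶜ) (G.induce ((IVerts G)ᶜ)) ≤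
              numIComponents G + pathCoverNumber (G.induce ((IVerts G)ᶜ)) := by
              have := ih ↥((IVerts G)ᶜ) (G.induce ((IVerts G)ᶜ)) (by omega)
              omega
          _ ≤ pathCoverNumber G := split_bound G


/-- For every finite simple graph `G`, `k(G) ≤ p(G)`. -/
theorem kNum_le_pathCoverNumber (V : Type) [Fintype V] (G : SimpleGraph V) :
    kNum G ≤ pathCoverNumber G :=
  kAux_le (Fintype.card V) V G le_rfl

end K2HypoPaper
end
end

section
/- Let G be a K₂-hamiltonian finite simple graph and (W,X) a non-trivial partition of V(G). If the induced subgraph G[X] contains two adjacent vertices and |X| ≥ 3, then p(G[W]) < |X| − 1 and k(G[W]) < |X| − 1. -/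
/- Definitions following "Generation and New Infinite Families of K₂-hypohamiltonian Graphs"
by Goedgebeur, Renders and Zamfirescu. -/

open scoped Classical

noncomputable section

namespace K2HypoPaper

variable {V : Type}

lemma exists_walk_of_chain (H : SimpleGraph V) :
    ∀ (x : V) (l : List V), List.Chain H.Adj x l →
    ∃ (y : V) (p : H.Walk x y), p.support = x :: l := by
  intro x l
  induction l generalizing x with
  | nil => exact fun _ => ⟨x, .nil, rfl⟩
  | cons b l ih =>
    intro h
    replace h := List.isChain_cons_cons.mp h
    obtain ⟨y, p, hp⟩ := ih b h.2
    exact ⟨y, .cons h.1 p, by simp [hp]⟩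

lemma exists_induced_walk (H : SimpleGraph V) (s : Set V) :
    ∀ {x y : V} (p : H.Walk x y) (_ : ∀ z ∈ p.support, z ∈ s) (hx : x ∈ s) (hy : y ∈ s),
    ∃ q : (H.induce s).Walk ⟨x, hx⟩ ⟨y, hy⟩, q.support.map Subtype.val = p.support := by
  intro x y p
  induction p with
  | nil => intro _ hx _; exact ⟨.nil, rfl⟩
  | @cons u b v hadj p ih =>
    intro hs hx hy
    have hb : b ∈ s := hs b (by simp)
    obtain ⟨q, hq⟩ := ih (fun z hz => hs z (by simp [hz])) hb hy
    have hadj' : (H.induce s).Adj ⟨u, hx⟩ ⟨b, hb⟩ := hadj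
    refine ⟨.cons hadj' q, ?_⟩
    show (⟨u, hx⟩ :: q.support : List ↥s).map Subtype.val = u :: p.support
    rw [List.map_cons, hq]

lemma exists_path_of_run (G : SimpleGraph V) (W : Set V) (L : List V) (hLne : L ≠ [])
    (hW : ∀ z ∈ L, z ∈ W) (hchain : L.Chain' G.Adj) (hnd : L.Nodup) :
    ∃ (u v : ↥W) (q : (G.induce W).Walk u v), q.IsPath ∧ q.support.map Subtype.val = L := by
  obtain ⟨a, L', rfl⟩ := List.exists_cons_of_ne_nil hLne
  have hchain' : List.Chain G.Adj a L' := hchain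
  obtain ⟨y, p, hp⟩ := exists_walk_of_chain G a L' hchain'
  obtain ⟨q, hq⟩ := exists_induced_walk G W p (by rw [hp]; exact hW)
    (hW a (by simp)) (hW y (by rw [← hp]; exact SimpleGraph.Walk.end_mem_support p))
  refine ⟨_, _, q, ?_, by rw [hq, hp]⟩
  rw [SimpleGraph.Walk.isPath_def]
  have : (q.support.map Subtype.val).Nodup := by rw [hq, hp]; exact hnd
  exact this.of_map _

set_option maxHeartbeats 1000000 in
lemma cover_of_list (G : SimpleGraph V) (W : Set V) :
    ∀ (N : ℕ) (L : List V), L.length ≤ N → L.Nodup → L.Chain' G.Adj →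
    ∃ (n : ℕ) (P : Fin n → (u : ↥W) × (v : ↥W) × (G.induce W).Walk u v),
      (∀ i, (P i).2.2.IsPath) ∧
      (∀ i j, i ≠ j → ∀ x, x ∈ (P i).2.2.support → x ∉ (P j).2.2.support) ∧
      (∀ x : ↥W, ↑x ∈ L → ∃ i, x ∈ (P i).2.2.support) ∧
      (∀ i (x : ↥W), x ∈ (P i).2.2.support → ↑x ∈ L) ∧
      n ≤ L.countP (fun x => decide (x ∉ W)) + 1 ∧
      ((∀ z ∈ L.head?, z ∉ W) → n ≤ L.countP (fun x => decide (x ∉ W))) := by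
  intro N
  induction N with
  | zero =>
    intro L hL _ _
    rw [Nat.le_zero, List.length_eq_zero_iff] at hL
    subst hL
    exact ⟨0, Fin.elim0, fun i => i.elim0, fun i => i.elim0, by simp, fun i => i.elim0,
      by simp, by simp⟩
  | succ N ih =>
    intro L hL hnd hchain
    classical
    have decomp : ∃ A B, L = A ++ B ∧ (∀ z ∈ A, z ∈ W) ∧
        (B = [] ∨ ∃ b B', B = b :: B' ∧ b ∉ W) := by
      set p : V → Bool := fun x => decide (x ∈ W) with hp
      refine ⟨L.takeWhile p, L.dropWhile p,
        (List.takeWhile_append_dropWhile (p := p) (l := L)).symm, ?_, ?_⟩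
      · intro z hz
        have := List.mem_takeWhile_imp hz
        simpa [hp] using this
      · cases h : L.dropWhile p with
        | nil => exact Or.inl rfl
        | cons b B' =>
          refine Or.inr ⟨b, B', rfl, ?_⟩
          have := List.head?_dropWhile_not p L
          rw [h] at this
          simpa [hp] using this
    obtain ⟨A, B, hLsplit, hAmem, hBalt⟩ := decomp
    rcases hBalt with rfl | ⟨b, B', rfl, hbW⟩
    · -- B = [], all of L in W
      rw [List.append_nil] at hLsplit
      subst hLsplit
      have hcount : L.countP (fun x => decide (x ∉ W)) = 0 := by
        rw [List.countP_eq_zero]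
        intro a ha
        simpa using hAmem a ha
      rw [hcount]
      obtain _ | ⟨a, L'⟩ := L
      · exact ⟨0, Fin.elim0, fun i => i.elim0, fun i => i.elim0, by simp, fun i => i.elim0,
          by simp, by simp⟩
      · obtain ⟨u, v, q, hpath, hsupp⟩ := exists_path_of_run G W (a :: L') (by simp)
          hAmem hchain hnd
        refine ⟨1, fun _ => ⟨u, v, q⟩, fun _ => hpath, ?_, ?_, ?_, by simp, ?_⟩
        · intro i j hij
          exact absurd (Subsingleton.elim i j) hij
        · intro x hx
          refine ⟨0, ?_⟩
          rw [← hsupp] at hx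
          obtain ⟨y, hy, hyx⟩ := List.mem_map.mp hx
          rwa [Subtype.val_injective hyx] at hy
        · intro i x hx
          rw [← hsupp]
          exact List.mem_map_of_mem hx
        · intro hhead
          exact absurd (hAmem a (by simp)) (by simpa using hhead)
    · -- B = b :: B' with b ∉ W
      subst hLsplit
      have hB'len : B'.length ≤ N := by
        have := hL
        simp only [List.length_append, List.length_cons] at this
        omega
      have hB'suff : B' <:+ A ++ b :: B' := ⟨A ++ [b], by simp⟩
      obtain ⟨n', P', hP'path, hP'disj, hP'cov, hP'sub, hP'le, _⟩ :=
        ih B' hB'len (hnd.sublist hB'suff.sublist) (hchain.suffix hB'suff)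
      have hcountL : (A ++ b :: B').countP (fun x => decide (x ∉ W))
          = B'.countP (fun x => decide (x ∉ W)) + 1 := by
        have hcA : List.countP (fun x => decide (x ∉ W)) A = 0 := by
          rw [List.countP_eq_zero]
          intro z hz
          simpa using hAmem z hz
        rw [List.countP_append, List.countP_cons, hcA]
        simp [hbW]
      cases hAe : A with
      | nil =>
        subst hAe
        refine ⟨n', P', hP'path, hP'disj, ?_, ?_, by omega, fun _ => by omega⟩
        · intro x hx
          apply hP'cov
          rw [List.nil_append, List.mem_cons] at hx
          rcases hx with h | h
          · exact absurd (h ▸ x.2) hbW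
          · exact h
        · intro i x hx
          have := hP'sub i x hx
          simp [this]
      | cons a A' =>
        subst hAe
        have hAne : (a :: A' : List V) ≠ [] := by simp
        have hApre : (a :: A' : List V) <+: (a :: A') ++ b :: B' := ⟨b :: B', rfl⟩
        obtain ⟨u, v, q, hqpath, hqsupp⟩ := exists_path_of_run G W (a :: A') hAne hAmem
          (hchain.prefix hApre) (hnd.sublist hApre.sublist)
        have hdisjAB : ∀ z ∈ (a :: A' : List V), z ∉ (b :: B' : List V) := by
          rw [List.nodup_append] at hnd
          exact fun z hz hz' => hnd.2.2 z hz z hz' rfl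
        have hsuppA : ∀ (x : ↥W), x ∈ q.support → (x : V) ∈ (a :: A' : List V) := by
          intro x hx
          rw [← hqsupp]
          exact List.mem_map_of_mem hx
        have hsuppAiff : ∀ (x : ↥W), (x : V) ∈ (a :: A' : List V) → x ∈ q.support := by
          intro x hx
          rw [← hqsupp] at hx
          obtain ⟨y, hy, hyx⟩ := List.mem_map.mp hx
          rwa [Subtype.val_injective hyx] at hy
        refine ⟨n' + 1, Fin.cons ⟨u, v, q⟩ P', ?_, ?_, ?_, ?_, by omega, ?_⟩
        · intro i
          refine Fin.cases ?_ ?_ i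
          · exact hqpath
          · intro j; exact hP'path j
        · intro i j hij x hxi hxj
          rcases Fin.eq_zero_or_eq_succ i with rfl | ⟨i', rfl⟩ <;>
            rcases Fin.eq_zero_or_eq_succ j with rfl | ⟨j', rfl⟩
          · exact hij rfl
          · exact hdisjAB _ (hsuppA x hxi) (List.mem_cons_of_mem _ (hP'sub j' x hxj))
          · exact hdisjAB _ (hsuppA x hxj) (List.mem_cons_of_mem _ (hP'sub i' x hxi))
          · exact hP'disj i' j' (fun h => hij (by rw [h])) x hxi hxj
        · intro x hx
          rw [List.mem_append] at hx
          rcases hx with h | h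
          · exact ⟨0, hsuppAiff x h⟩
          · rcases List.mem_cons.mp h with h' | h'
            · exact absurd (h' ▸ x.2) hbW
            · obtain ⟨i, hi⟩ := hP'cov x h'
              exact ⟨i.succ, hi⟩
        · intro i x hx
          rcases Fin.eq_zero_or_eq_succ i with rfl | ⟨i', rfl⟩
          · exact List.mem_append.mpr (Or.inl (hsuppA x hx))
          · exact List.mem_append.mpr (Or.inr (List.mem_cons_of_mem _ (hP'sub i' x hx)))
        · intro hhead
          exact absurd (hAmem a (by simp)) (by simpa using hhead)

/-- All vertices on a walk lie in the connected component of its start. -/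
lemma connectedComponentMk_eq_of_mem_support {H : SimpleGraph V} {u v x : V}
    (p : H.Walk u v) (hx : x ∈ p.support) :
    H.connectedComponentMk x = H.connectedComponentMk u :=
  SimpleGraph.ConnectedComponent.eq.mpr ((p.takeUntil x hx).reachable.symm)

/-- On a path, a vertex of degree 1 must be an endpoint. -/
lemma eq_endpoints_of_deg_one {H : SimpleGraph V} [Fintype V] :
    ∀ {u v : V} (p : H.Walk u v), p.IsPath → ∀ {x : V}, x ∈ p.support →
    (H.neighborSet x).ncard = 1 → x = u ∨ x = v := by
  intro u v p
  induction p with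
  | nil =>
    intro _ x hx _
    exact Or.inl (by simpa using hx)
  | @cons u b v hadj q ih =>
    intro hp x hx hdeg
    rw [SimpleGraph.Walk.support_cons, List.mem_cons] at hx
    rcases hx with rfl | hx
    · exact Or.inl rfl
    have hqp : q.IsPath := hp.of_cons
    rcases ih hqp hx hdeg with rfl | rfl
    · -- x = b; show b = v or contradiction
      by_cases hbv : x = v
      · exact Or.inr hbv
      · exfalso
        cases q with
        | nil => exact hbv rfl
        | @cons _ c _ hadj' q' =>
          have hu : u ∈ H.neighborSet x := hadj.symm
          have hc : c ∈ H.neighborSet x := hadj'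
          have huc : u ≠ c := by
            intro h
            have : u ∈ (SimpleGraph.Walk.cons hadj' q').support := by
              rw [h]; simp
            exact (SimpleGraph.Walk.cons_isPath_iff _ _ |>.mp hp).2 this
          have : 1 < (H.neighborSet x).ncard := by
            rw [Set.one_lt_ncard_iff (Set.toFinite _)]
            exact ⟨u, c, hu, hc, huc⟩
          omega
    · exact Or.inr rfl

lemma kAux_le_cover : ∀ (fuel : ℕ) (Wt : Type) [Fintype Wt] (H : SimpleGraph Wt),
    Fintype.card Wt ≤ fuel → ∀ (n : ℕ) (P : Fin n → (u : Wt) × (v : Wt) × H.Walk u v),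
    (∀ i, (P i).2.2.IsPath) →
    (∀ i j, i ≠ j → ∀ x, x ∈ (P i).2.2.support → x ∉ (P j).2.2.support) →
    (∀ x, ∃ i, x ∈ (P i).2.2.support) →
    kAux fuel Wt H ≤ n := by
  intro fuel
  induction fuel with
  | zero => intros; simp [kAux]
  | succ m ih =>
    intro Wt _ H hfuel n P hpath hdisj hcov
    simp only [kAux]
    by_cases hemp : IsEmpty Wt
    · rw [if_pos hemp]
      exact Nat.zero_le n
    rw [if_neg hemp]
    have hne : Nonempty Wt := not_isEmpty_iff.mp hemp
    have hn1 : 1 ≤ n := by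
      obtain ⟨w⟩ := hne
      obtain ⟨i, _⟩ := hcov w
      rcases Nat.eq_zero_or_pos n with rfl | h
      · exact i.elim0
      · exact h
    -- each vertex of degree one is an endpoint of its path, so ≤ 2 per path
    have hdeg : degOneCount H ≤ 2 * n := by
      classical
      set D : Set Wt := {v | (H.neighborSet v).ncard = 1} with hD
      set f : Wt → Fin n := fun x => (hcov x).choose with hf
      have hfx : ∀ x, x ∈ (P (f x)).2.2.support := fun x => (hcov x).choose_spec
      have h1 : degOneCount H = D.toFinset.card := Set.ncard_eq_toFinset_card' D
      rw [h1]
      have h2 : D.toFinset.card = ∑ i : Fin n, (D.toFinset.filter (fun x => f x = i)).card :=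
        Finset.card_eq_sum_card_fiberwise (fun x _ => Finset.mem_univ (f x))
      rw [h2]
      have h3 : ∀ i : Fin n, (D.toFinset.filter (fun x => f x = i)).card ≤ 2 := by
        intro i
        have hsub : D.toFinset.filter (fun x => f x = i) ⊆ {(P i).1, (P i).2.1} := by
          intro x hxmem
          rw [Finset.mem_filter] at hxmem
          obtain ⟨hxD, hxi⟩ := hxmem
          have hxd : (H.neighborSet x).ncard = 1 := by
            have := hxD
            rw [Set.mem_toFinset] at this
            exact this
          have hxs : x ∈ (P i).2.2.support := by rw [← hxi]; exact hfx x
          rcases eq_endpoints_of_deg_one (P i).2.2 (hpath i) hxs hxd with rfl | rfl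
          · exact Finset.mem_insert_self _ _
          · exact Finset.mem_insert_of_mem (Finset.mem_singleton_self _)
        calc (D.toFinset.filter (fun x => f x = i)).card
            ≤ ({(P i).1, (P i).2.1} : Finset Wt).card := Finset.card_le_card hsub
          _ ≤ 2 := Finset.card_insert_le _ _ |>.trans (by simp)
      calc ∑ i : Fin n, (D.toFinset.filter (fun x => f x = i)).card
          ≤ ∑ _i : Fin n, 2 := Finset.sum_le_sum (fun i _ => h3 i)
        _ = 2 * n := by simp [mul_comm]
    by_cases hI : IVerts H = ∅
    · rw [if_pos hI]
      have : degOneCount H ≤ 2 * n := hdeg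
      have hmax : (degOneCount H + 1) / 2 ≤ n := by omega
      omega
    rw [if_neg hI]
    -- F1: membership in IVerts depends only on the path
    have hF1 : ∀ (i : Fin n) (x : Wt), x ∈ (P i).2.2.support →
        (x ∈ IVerts H ↔ (P i).1 ∈ IVerts H) := by
      intro i x hx
      have hcc := connectedComponentMk_eq_of_mem_support (P i).2.2 hx
      constructor <;> intro h
      · show (H.connectedComponentMk (P i).1).supp.ncard ≤ 2
        rw [← hcc]; exact h
      · show (H.connectedComponentMk x).supp.ncard ≤ 2
        rw [hcc]; exact h
    classical
    set pred : Fin n → Prop := fun i => (P i).1 ∈ IVerts H with hpred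
    set T : Finset (Fin n) := Finset.univ.filter pred with hT
    set T' : Finset (Fin n) := Finset.univ.filter (fun i => ¬ pred i) with hT'
    have hTT' : T.card + T'.card = n := by
      rw [hT, hT']
      rw [Finset.card_filter_add_card_filter_not]
      simp
    -- Part A : numIComponents ≤ T.card
    have hA : numIComponents H ≤ T.card := by
      set f₀ : H.ConnectedComponent → Fin n := fun c => (hcov c.out).choose with hf₀
      have hf₀x : ∀ c : H.ConnectedComponent, c.out ∈ (P (f₀ c)).2.2.support :=
        fun c => (hcov c.out).choose_spec
      have hmk : ∀ c : H.ConnectedComponent, H.connectedComponentMk c.out = c :=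
        fun c => c.out_eq
      have key : ∀ c : H.ConnectedComponent, c.supp.ncard ≤ 2 → f₀ c ∈ T ∧
          H.connectedComponentMk (P (f₀ c)).1 = c := by
        intro c hc
        have h1 : H.connectedComponentMk c.out = H.connectedComponentMk (P (f₀ c)).1 :=
          connectedComponentMk_eq_of_mem_support _ (hf₀x c)
        have h2 : H.connectedComponentMk (P (f₀ c)).1 = c := by rw [← h1, hmk]
        refine ⟨?_, h2⟩
        rw [hT, Finset.mem_filter]
        refine ⟨Finset.mem_univ _, ?_⟩
        show (H.connectedComponentMk (P (f₀ c)).1).supp.ncard ≤ 2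
        rw [h2]; exact hc
      have hle : numIComponents H ≤ (↑T : Set (Fin n)).ncard := by
        apply Set.ncard_le_ncard_of_injOn f₀
        · intro c hc
          exact (key c hc).1
        · intro c hc c' hc' heq
          rw [← (key c hc).2, ← (key c' hc').2, heq]
      simpa [Set.ncard_coe_finset] using hle
    -- Part B : the remaining paths cover the complement of IVerts
    have hB : kAux m ↥((IVerts H)ᶜ) (H.induce ((IVerts H)ᶜ)) ≤ T'.card := by
      obtain ⟨y, hy⟩ := Set.nonempty_iff_ne_empty.mpr hI
      have hcard : Fintype.card ↥((IVerts H)ᶜ) ≤ m := by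
        have h1 : Fintype.card ↥((IVerts H)ᶜ) < Fintype.card Wt := by
          apply Fintype.card_subtype_lt (x := y)
          simp [hy]
        omega
      have hsuppc : ∀ i : Fin n, ¬ pred i → ∀ x ∈ (P i).2.2.support, x ∈ (IVerts H)ᶜ := by
        intro i hi x hx hxI
        exact hi ((hF1 i x hx).mp hxI)
      have hidx : ∀ j : Fin T'.card, ¬ pred ((T'.equivFin.symm j : ↥T') : Fin n) := by
        intro j
        have h2 := (T'.equivFin.symm j).2
        exact (Finset.mem_filter.mp h2).2
      have hQ : ∀ j : Fin T'.card, ∃ (u v : ↥((IVerts H)ᶜ))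
          (q : (H.induce ((IVerts H)ᶜ)).Walk u v),
          q.support.map Subtype.val = (P ((T'.equivFin.symm j : ↥T') : Fin n)).2.2.support := by
        intro j
        obtain ⟨q, hq⟩ := exists_induced_walk H ((IVerts H)ᶜ)
          (P ((T'.equivFin.symm j : ↥T') : Fin n)).2.2
          (hsuppc _ (hidx j)) (hsuppc _ (hidx j) _ (SimpleGraph.Walk.start_mem_support _))
          (hsuppc _ (hidx j) _ (SimpleGraph.Walk.end_mem_support _))
        exact ⟨_, _, q, hq⟩
      set Q : Fin T'.card → (u : ↥((IVerts H)ᶜ)) × (v : ↥((IVerts H)ᶜ)) ×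
          (H.induce ((IVerts H)ᶜ)).Walk u v :=
        fun j => ⟨(hQ j).choose, (hQ j).choose_spec.choose,
          (hQ j).choose_spec.choose_spec.choose⟩ with hQdef
      have hQsupp : ∀ j, (Q j).2.2.support.map Subtype.val
          = (P ((T'.equivFin.symm j : ↥T') : Fin n)).2.2.support :=
        fun j => (hQ j).choose_spec.choose_spec.choose_spec
      have hQmem : ∀ (j) (x : ↥((IVerts H)ᶜ)), x ∈ (Q j).2.2.support ↔
          (x : Wt) ∈ (P ((T'.equivFin.symm j : ↥T') : Fin n)).2.2.support := by
        intro j x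
        rw [← hQsupp j]
        constructor
        · exact fun h => List.mem_map_of_mem h
        · intro h
          obtain ⟨z, hz, hzx⟩ := List.mem_map.mp h
          rwa [Subtype.val_injective hzx] at hz
      apply ih _ _ hcard T'.card Q
      · intro j
        rw [SimpleGraph.Walk.isPath_def]
        have hnd : ((Q j).2.2.support.map Subtype.val).Nodup := by
          rw [hQsupp j]
          exact (hpath _).support_nodup
        exact hnd.of_map _
      · intro j j' hjj' x hx hx'
        have hne2 : ((T'.equivFin.symm j : ↥T') : Fin n)
            ≠ ((T'.equivFin.symm j' : ↥T') : Fin n) := by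
          intro h
          exact hjj' (by
            have := Subtype.val_injective h
            have h2 := congrArg T'.equivFin this
            simpa using h2)
        exact hdisj _ _ hne2 (x : Wt) ((hQmem j x).mp hx) ((hQmem j' x).mp hx')
      · intro x
        obtain ⟨i, hi⟩ := hcov (x : Wt)
        have hnp : ¬ pred i := fun hp => x.2 ((hF1 i (x : Wt) hi).mpr hp)
        have hiT' : i ∈ T' := by
          rw [hT', Finset.mem_filter]; exact ⟨Finset.mem_univ _, hnp⟩
        refine ⟨T'.equivFin ⟨i, hiT'⟩, ?_⟩
        rw [hQmem]
        have heq : (T'.equivFin.symm (T'.equivFin ⟨i, hiT'⟩) : ↥T') = ⟨i, hiT'⟩ :=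
          Equiv.symm_apply_apply _ _
        rw [heq]
        exact hi
    omega


/-- Core construction: from a hamiltonian cycle of `G[S]` with `W ⊆ S` and a vertex of
`S \ W`, extract a path cover of `G[W]` by at most `|S \ W|` paths. -/
lemma exists_cover_of_hamiltonian (G : SimpleGraph V) (W S : Set V)
    (hWS : W ⊆ S) (a : ↥S) (c : (G.induce S).Walk a a) (hcyc : c.IsCycle)
    (hsup : ∀ z : ↥S, z ∈ c.support)
    (x' : V) (hx'S : x' ∈ S) (hx'W : x' ∉ W) :
    ∃ (n : ℕ) (P : Fin n → (u : ↥W) × (v : ↥W) × (G.induce W).Walk u v),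
      (∀ i, (P i).2.2.IsPath) ∧
      (∀ i j, i ≠ j → ∀ x, x ∈ (P i).2.2.support → x ∉ (P j).2.2.support) ∧
      (∀ x : ↥W, ∃ i, x ∈ (P i).2.2.support) ∧
      n ≤ (S \ W).ncard := by
  classical
  set x'' : ↥S := ⟨x', hx'S⟩ with hx''def
  have hx''mem : x'' ∈ c.support := hsup x''
  set c' := c.rotate x'' hx''mem with hc'def
  have hc'cyc : c'.IsCycle := hcyc.rotate hx''mem
  have hc'nnil : ¬ c'.Nil := hc'cyc.not_nil
  set t : List ↥S := c'.support.tail with ht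
  have htnd : t.Nodup := hc'cyc.support_nodup
  have hsupp_eq : c'.support = x'' :: t := SimpleGraph.Walk.support_eq_cons c'
  -- every vertex of S occurs in t
  have hcov_t : ∀ z : ↥S, z ∈ t := by
    intro z
    have h1 : z ∈ c.support := hsup z
    have h2 : z ∈ c.support.tail := by
      have hnnil : ¬ c.Nil := hcyc.not_nil
      have h3 : c.support = a :: c.support.tail := SimpleGraph.Walk.support_eq_cons c
      have htne : c.support.tail ≠ [] := by
        intro h
        have hlen2 : c.support.length = c.length + 1 := SimpleGraph.Walk.length_support c
        rw [h3, h] at hlen2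
        have hlen3 : c.length = 0 := by simpa using hlen2.symm
        exact hnnil (SimpleGraph.Walk.nil_iff_length_eq.mpr hlen3)
      have hgl : c.support.tail.getLast htne = a := by
        rw [List.getLast_tail]
        exact SimpleGraph.Walk.getLast_support c
      have ha_tail : a ∈ c.support.tail := by
        have hmem := List.getLast_mem htne
        rw [hgl] at hmem
        exact hmem
      rw [h3, List.mem_cons] at h1
      rcases h1 with rfl | h1
      · exact ha_tail
      · exact h1
    have hperm := (SimpleGraph.Walk.support_rotate c x'' hx''mem).perm
    exact (hperm.mem_iff).mpr h2
  have htne : t ≠ [] := by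
    intro h
    have := hcov_t x''
    rw [h] at this
    simp at this
  have htlast : t.getLast htne = x'' := by
    show c'.support.tail.getLast htne = x''
    rw [List.getLast_tail]
    exact SimpleGraph.Walk.getLast_support c'
  have htsplit : t.dropLast ++ [x''] = t := by
    conv_rhs => rw [← List.dropLast_append_getLast htne]
    rw [htlast]
  have hx''ndl : x'' ∉ t.dropLast := by
    have h1 : t.Nodup := htnd
    rw [← htsplit, List.nodup_append] at h1
    intro h
    exact h1.2.2 _ h _ (by simp) rfl
  set u : List ↥S := x'' :: t.dropLast with hu
  have hund : u.Nodup := by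
    rw [hu, List.nodup_cons]
    exact ⟨hx''ndl, (List.dropLast_sublist t).nodup htnd⟩
  have hucov : ∀ z : ↥S, z ∈ u := by
    intro z
    rcases eq_or_ne z x'' with rfl | hz
    · simp [hu]
    · have h1 : z ∈ t := hcov_t z
      rw [← htsplit, List.mem_append] at h1
      rcases h1 with h1 | h1
      · exact List.mem_cons_of_mem _ h1
      · simp at h1
        exact absurd h1 hz
  have huchain : u.Chain' (G.induce S).Adj := by
    have h1 : List.Chain' (G.induce S).Adj c'.support := SimpleGraph.Walk.isChain_adj_support c'
    have h2 : u <+: c'.support := by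
      rw [hsupp_eq, ← htsplit, hu]
      exact ⟨[x''], by simp⟩
    exact h1.prefix h2
  set L : List V := u.map Subtype.val with hL
  have hLnd : L.Nodup := hund.map Subtype.val_injective
  have hLchain : L.Chain' G.Adj := by
    show List.IsChain G.Adj (u.map Subtype.val)
    rw [List.isChain_map]
    exact huchain.imp (fun a b h => h)
  have hLS : ∀ z ∈ L, z ∈ S := by
    intro z hz
    rw [hL, List.mem_map] at hz
    obtain ⟨y, _, rfl⟩ := hz
    exact y.2
  have hSL : ∀ z (hz : z ∈ S), z ∈ L := by
    intro z hz
    rw [hL, List.mem_map]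
    exact ⟨⟨z, hz⟩, hucov _, rfl⟩
  obtain ⟨n, P, hPpath, hPdisj, hPcov, hPsub, _, hPle⟩ :=
    cover_of_list G W L.length L le_rfl hLnd hLchain
  have hhead : ∀ z ∈ L.head?, z ∉ W := by
    intro z hz
    rw [hL, hu] at hz
    simp only [List.map_cons, List.head?_cons, Option.mem_def, Option.some.injEq] at hz
    subst hz
    exact hx'W
  have hn := hPle hhead
  have hcount : L.countP (fun x => decide (x ∉ W)) = (S \ W).ncard := by
    set F := L.filter (fun x => decide (x ∉ W)) with hF
    have hFnd : F.Nodup := hLnd.filter _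
    have hFmem : ∀ z, z ∈ F ↔ z ∈ S \ W := by
      intro z
      rw [hF, List.mem_filter]
      constructor
      · rintro ⟨hzL, hzW⟩
        exact ⟨hLS z hzL, by simpa using hzW⟩
      · rintro ⟨hzS, hzW⟩
        exact ⟨hSL z hzS, by simpa using hzW⟩
    have hXd : (S \ W) = ↑F.toFinset := by
      ext z
      simp only [Finset.coe_sort_coe, Finset.mem_coe, List.mem_toFinset]
      exact (hFmem z).symm
    have h1 : (S \ W).ncard = F.length := by
      rw [hXd, Set.ncard_coe_finset, List.toFinset_card_of_nodup hFnd]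
    rw [List.countP_eq_length_filter, ← hF, h1]
  rw [hcount] at hn
  refine ⟨n, P, hPpath, hPdisj, ?_, hn⟩
  intro x
  exact hPcov x (hSL (x : V) (hWS x.2))

/-- Lemma: type A / type B obstruction. Let `G` be a `K₂`-hamiltonian
graph and `(W, X)` a non-trivial partition of `V(G)`. If `G[X]` contains two adjacent
vertices and `|X| ≥ 3`, then `p(G[W]) < |X| − 1` and `k(G[W]) < |X| − 1`. -/
theorem typeA_typeB_obstruction (V : Type) [Fintype V] (G : SimpleGraph V)
    (hG : IsK2Hamiltonian G) (W X : Set V)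
    (hdisj : Disjoint W X) (hunion : W ∪ X = Set.univ)
    (hWne : W.Nonempty) (hXne : X.Nonempty)
    (hadj : ∃ v ∈ X, ∃ w ∈ X, G.Adj v w) (hX3 : 3 ≤ X.ncard) :
    pathCoverNumber (G.induce W) < X.ncard - 1 ∧ kNum (G.induce W) < X.ncard - 1 := by
  classical
  obtain ⟨v, hvX, w, hwX, hvw⟩ := hadj
  obtain ⟨a, c, hc⟩ := hG v w hvw
  have hvwX : ({v, w} : Set V) ⊆ X := by
    intro z hz
    rcases hz with rfl | rfl
    · exact hvX
    · exact hwX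
  have hvwcard : ({v, w} : Set V).ncard = 2 := Set.ncard_pair hvw.ne
  obtain ⟨x', hx'X, hx'vw⟩ : ∃ x' ∈ X, x' ∉ ({v, w} : Set V) := by
    by_contra hcon
    push_neg at hcon
    have := Set.ncard_le_ncard hcon (Set.toFinite _)
    omega
  have hWS : W ⊆ {x : V | x ≠ v ∧ x ≠ w} := by
    intro z hz
    constructor
    · rintro rfl; exact Set.disjoint_left.mp hdisj hz hvX
    · rintro rfl; exact Set.disjoint_left.mp hdisj hz hwX
  have hx'S : x' ∈ {x : V | x ≠ v ∧ x ≠ w} := by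
    constructor
    · rintro rfl; exact hx'vw (by simp)
    · rintro rfl; exact hx'vw (by simp)
  have hx'W : x' ∉ W := fun hW => Set.disjoint_left.mp hdisj hW hx'X
  obtain ⟨n, P, hPpath, hPdisj, hPcov, hn⟩ :=
    exists_cover_of_hamiltonian G W {x : V | x ≠ v ∧ x ≠ w} hWS a c
      (@SimpleGraph.Walk.IsHamiltonianCycle.isCycle _
        (fun a b => Classical.propDecidable (a = b)) _ _ _ hc)
      (fun z => @SimpleGraph.Walk.IsHamiltonianCycle.mem_support _
        (fun a b => Classical.propDecidable (a = b)) _ _ _ hc z) x' hx'S hx'W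
  have hdiff : ({x : V | x ≠ v ∧ x ≠ w} \ W) = X \ ({v, w} : Set V) := by
    ext z
    simp only [Set.mem_diff, Set.mem_setOf_eq, Set.mem_insert_iff, Set.mem_singleton_iff]
    constructor
    · rintro ⟨⟨hzv, hzw⟩, hzW⟩
      have : z ∈ W ∪ X := hunion ▸ Set.mem_univ z
      rcases this with h | h
      · exact absurd h hzW
      · exact ⟨h, by tauto⟩
    · rintro ⟨hzX, hzvw⟩
      push_neg at hzvw
      exact ⟨hzvw, fun hW => Set.disjoint_left.mp hdisj hW hzX⟩
  have hdiffcard : ({x : V | x ≠ v ∧ x ≠ w} \ W).ncard = X.ncard - 2 := by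
    rw [hdiff, Set.ncard_diff hvwX (Set.toFinite _), hvwcard]
  rw [hdiffcard] at hn
  have hcover : IsPathCover (G.induce W) P := ⟨hPpath, hPdisj, hPcov⟩
  have hp_le : pathCoverNumber (G.induce W) ≤ n := Nat.sInf_le ⟨P, hcover⟩
  have hk_le : kNum (G.induce W) ≤ n :=
    kAux_le_cover (Fintype.card ↥W) ↥W (G.induce W) le_rfl n P hPpath hPdisj hPcov
  constructor
  · omega
  · omega

end K2HypoPaper
end
end

section
/- Let G be a connected K₂-hamiltonian finite simple graph and (W,X) a non-trivial partition of V(G) with |X| > 1 such that the induced subgraph G[X] contains no two adjacent vertices. Then p(G[W]) < |X| + 1. -/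
/- Definitions following "Generation and New Infinite Families of K₂-hypohamiltonian Graphs"
by Goedgebeur, Renders and Zamfirescu. -/

open scoped Classical

noncomputable section

namespace K2HypoPaper

variable {V : Type}

def mkWalk {α : Type} (H : SimpleGraph α) :
    (a : α) → (l : List α) → List.Chain H.Adj a l → Σ v, H.Walk a v
  | a, [], _ => ⟨a, SimpleGraph.Walk.nil⟩
  | _, b :: t, h =>
    let r := mkWalk H b t (List.chain_cons.mp h).2
    ⟨r.1, SimpleGraph.Walk.cons (List.chain_cons.mp h).1 r.2⟩

lemma mkWalk_support {α : Type} (H : SimpleGraph α) :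
    ∀ (a : α) (l : List α) (h : List.Chain H.Adj a l), (mkWalk H a l h).2.support = a :: l
  | _, [], _ => rfl
  | a, b :: t, h => by
    simp only [mkWalk, SimpleGraph.Walk.support_cons]
    rw [mkWalk_support H b t (List.chain_cons.mp h).2]

def walkOfList {α : Type} (H : SimpleGraph α) : (l : List α) → l ≠ [] → l.Chain' H.Adj →
    (u : α) × (v : α) × H.Walk u v
  | a :: t, _, hc => ⟨a, (mkWalk H a t hc).1, (mkWalk H a t hc).2⟩

lemma walkOfList_support {α : Type} (H : SimpleGraph α) :
    ∀ (l : List α) (h : l ≠ []) (hc : l.Chain' H.Adj), (walkOfList H l h hc).2.2.support = l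
  | a :: t, _, hc => mkWalk_support H a t hc

lemma pathCoverNumber_le_of_lists {α : Type} (H : SimpleGraph α) (LL : List (List α))
    (hne : ∀ l ∈ LL, l ≠ [])
    (hch : ∀ l ∈ LL, l.Chain' H.Adj)
    (hnd : LL.flatten.Nodup)
    (hcov : ∀ x : α, x ∈ LL.flatten) :
    pathCoverNumber H ≤ LL.length := by
  obtain ⟨hnds, hpw⟩ := List.nodup_flatten.mp hnd
  apply Nat.sInf_le
  refine ⟨fun i => walkOfList H (LL.get i) (hne _ (LL.get_mem ..)) (hch _ (LL.get_mem ..)),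
    ?_, ?_, ?_⟩
  · intro i
    apply SimpleGraph.Walk.IsPath.mk'
    rw [walkOfList_support]
    exact hnds _ (LL.get_mem ..)
  · intro i j hij x hxi
    rw [walkOfList_support] at hxi ⊢
    have hdisj : (LL.get i).Disjoint (LL.get j) := by
      rcases lt_or_gt_of_ne hij with h | h
      · exact List.pairwise_iff_get.mp hpw i j h
      · exact (List.pairwise_iff_get.mp hpw j i h).symm
    exact hdisj hxi
  · intro x
    obtain ⟨l, hl, hxl⟩ := List.mem_flatten.mp (hcov x)
    obtain ⟨i, rfl⟩ := List.mem_iff_get.mp hl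
    exact ⟨i, by rw [walkOfList_support]; exact hxl⟩

lemma ihc_rotate {α : Type} [DecidableEq α] {H : SimpleGraph α} {a b : α} {p : H.Walk a a}
    (hp : p.IsHamiltonianCycle) (hb : b ∈ p.support) :
    (p.rotate b hb).IsHamiltonianCycle := by
  rw [SimpleGraph.Walk.isHamiltonianCycle_iff_isCycle_and_support_count_tail_eq_one] at hp ⊢
  refine ⟨hp.1.rotate hb, fun v => ?_⟩
  rw [((SimpleGraph.Walk.support_rotate p b hb).perm).count_eq]
  exact hp.2 v

def hbn (W : Set V) : List V → ℕ
  | [] => 0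
  | a :: _ => if a ∈ W then 1 else 0

lemma hbn_le_one (W : Set V) (L : List V) : hbn W L ≤ 1 := by
  cases L with
  | nil => simp [hbn]
  | cons a t => by_cases h : a ∈ W <;> simp [hbn, h]

lemma splitList (G : SimpleGraph V) (W : Set V) :
    ∀ L : List V, L.Chain' G.Adj →
    ∃ Ls : List (List V),
      (∀ l ∈ Ls, l ≠ []) ∧
      (∀ l ∈ Ls, l.Chain' G.Adj) ∧
      (∀ l ∈ Ls, ∀ v ∈ l, v ∈ W) ∧
      Ls.flatten = L.filter (fun v => decide (v ∈ W)) ∧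
      Ls.length ≤ L.countP (fun v => decide (v ∉ W)) + hbn W L := by
  intro L
  induction L with
  | nil => exact fun _ => ⟨[], by simp, by simp, by simp, by simp, by simp [hbn]⟩
  | cons a L' ih =>
    intro hch
    obtain ⟨Ls', h1, h2, h3, h4, h5⟩ := ih hch.tail
    by_cases ha : a ∈ W
    · cases hLs : Ls' with
      | nil =>
        refine ⟨[[a]], by simp, fun l hl => by simp at hl; subst hl; exact List.isChain_singleton a, by simp [ha], ?_, ?_⟩
        · subst hLs
          simp only [List.flatten_nil] at h4
          simp [List.filter_cons, ha, ← h4]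
        · simp [List.countP_cons, hbn, ha]
      | cons l₀ rest =>
        subst hLs
        cases hl₀ : l₀ with
        | nil => exact absurd hl₀ (h1 _ (by simp))
        | cons b l₀' =>
          subst hl₀
          cases hL' : L' with
          | nil =>
            exfalso
            subst hL'
            simp at h4
          | cons a' L'' =>
            subst hL'
            by_cases ha' : a' ∈ W
            · -- b = a'
              have hba : b = a' := by
                rw [List.filter_cons_of_pos (by simpa using ha')] at h4
                simpa using congrArg List.head? h4
              refine ⟨(a :: b :: l₀') :: rest, ?_, ?_, ?_, ?_, ?_⟩
              · intro l hl
                rcases List.mem_cons.mp hl with rfl | hl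
                · simp
                · exact h1 _ (by simp [hl])
              · intro l hl
                rcases List.mem_cons.mp hl with rfl | hl
                · refine List.isChain_cons_cons.mpr ⟨?_, h2 _ (by simp)⟩
                  rw [hba]
                  exact (List.isChain_cons_cons.mp hch).1
                · exact h2 _ (by simp [hl])
              · intro l hl v hv
                rcases List.mem_cons.mp hl with rfl | hl
                · rcases List.mem_cons.mp hv with rfl | hv
                  · exact ha
                  · exact h3 _ (by simp) _ hv
                · exact h3 _ (by simp [hl]) _ hv
              · rw [List.filter_cons_of_pos (by simpa using ha), ← h4]
                simp
              · rw [List.countP_cons]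
                simp only [hbn, if_pos ha]
                have : ((b :: l₀') :: rest).length ≤ (a' :: L'').countP (fun v => decide (v ∉ W)) + 1 := by
                  simpa [hbn, ha'] using h5
                simpa [ha] using this
            · refine ⟨[a] :: (b :: l₀') :: rest, ?_, ?_, ?_, ?_, ?_⟩
              · intro l hl
                rcases List.mem_cons.mp hl with rfl | hl
                · simp
                · exact h1 _ hl
              · intro l hl
                rcases List.mem_cons.mp hl with rfl | hl
                · exact List.isChain_singleton a
                · exact h2 _ hl
              · intro l hl v hv
                rcases List.mem_cons.mp hl with rfl | hl
                · rcases List.mem_cons.mp hv with rfl | hv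
                  · exact ha
                  · simp at hv
                · exact h3 _ hl _ hv
              · rw [List.filter_cons_of_pos (by simpa using ha), ← h4]
                simp
              · have : ((b :: l₀') :: rest).length ≤ (a' :: L'').countP (fun v => decide (v ∉ W)) := by
                  simpa [hbn, ha'] using h5
                have h6 : (a :: a' :: L'').countP (fun v => decide (v ∉ W))
                    = (a' :: L'').countP (fun v => decide (v ∉ W)) := by
                  simp [List.countP_cons, ha]
                rw [h6]
                simp only [hbn, if_pos ha, List.length_cons]
                simp only [List.length_cons] at this
                omega
    · refine ⟨Ls', h1, h2, h3, ?_, ?_⟩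
      · rw [List.filter_cons_of_neg (by simpa using ha)]
        exact h4
      · calc Ls'.length ≤ L'.countP (fun v => decide (v ∉ W)) + hbn W L' := h5
          _ ≤ L'.countP (fun v => decide (v ∉ W)) + 1 := by
              exact Nat.add_le_add_left (hbn_le_one W L') _
          _ ≤ (a :: L').countP (fun v => decide (v ∉ W)) + hbn W (a :: L') := by
              simp [List.countP_cons, ha, hbn]


/-- Corollary. Let `G` be a connected `K₂`-hamiltonian graph and
`(W, X)` a non-trivial partition of `V(G)` with `|X| > 1` such that `G[X]` contains no
two adjacent vertices. Then `p(G[W]) < |X| + 1`. -/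
theorem nonAdj_pathCover_corollary (V : Type) [Fintype V] (G : SimpleGraph V)
    (hconn : G.Connected) (hG : IsK2Hamiltonian G) (W X : Set V)
    (hdisj : Disjoint W X) (hunion : W ∪ X = Set.univ)
    (hWne : W.Nonempty) (hXne : X.Nonempty) (hX1 : 1 < X.ncard)
    (hindep : ∀ v ∈ X, ∀ w ∈ X, ¬ G.Adj v w) :
    pathCoverNumber (G.induce W) < X.ncard + 1 := by
  obtain ⟨x0, hx0⟩ := hXne
  have hXW : ∀ v : V, v ∈ X → v ∉ W := fun v hv hw => Set.disjoint_left.mp hdisj hw hv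
  have hWX : ∀ v : V, v ∉ W → v ∈ X := by
    intro v hv
    have hv2 : v ∈ W ∪ X := hunion ▸ Set.mem_univ v
    exact hv2.resolve_left hv
  -- a neighbor w ∈ W of x0
  obtain ⟨w0, hw0⟩ := hWne
  have hne0 : x0 ≠ w0 := fun h => hXW x0 hx0 (h ▸ hw0)
  obtain ⟨q⟩ := hconn.preconnected x0 w0
  obtain ⟨w, hadj, hwW⟩ : ∃ w, G.Adj x0 w ∧ w ∈ W := by
    cases q with
    | nil => exact absurd rfl hne0
    | @cons _ y _ h q' =>
      refine ⟨y, h, ?_⟩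
      by_contra hy
      exact hindep x0 hx0 y (hWX y hy) h
  -- the hamiltonian cycle of G - x0 - w
  obtain ⟨a, p, hp0⟩ := hG x0 w hadj
  have hp : p.IsHamiltonianCycle := by
    convert hp0 using 2 <;> exact Subsingleton.elim _ _
  set S : Set V := {z : V | z ≠ x0 ∧ z ≠ w} with hSdef
  -- a second vertex of X
  obtain ⟨x2, hx2X, hx2ne⟩ := Set.exists_ne_of_one_lt_ncard hX1 x0
  have hx2S : x2 ∈ S := ⟨hx2ne, fun h => hXW x2 hx2X (h ▸ hwW)⟩
  have hmem : (⟨x2, hx2S⟩ : ↥S) ∈ p.support := hp.mem_support _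
  set x2s : ↥S := ⟨x2, hx2S⟩ with hx2s
  set p' := p.rotate _ hmem with hp'def
  have hp' : p'.IsHamiltonianCycle := by rw [hp'def]; exact ihc_rotate hp hmem
  have hcount :=
    (SimpleGraph.Walk.isHamiltonianCycle_iff_isCycle_and_support_count_tail_eq_one.mp hp').2
  set T : List ↥S := p'.support.tail with hT
  have hTnd : T.Nodup := by
    letI : BEq ↥S := instBEqOfDecidableEq
    exact List.nodup_iff_count_le_one.mpr fun v => le_of_eq (hcount v)
  have hTmem : ∀ v : ↥S, v ∈ T := fun v => by
    letI : BEq ↥S := instBEqOfDecidableEq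
    exact List.count_pos_iff.mp (by rw [hcount v]; norm_num)
  have hchT : T.Chain' (G.induce S).Adj := (SimpleGraph.Walk.isChain_adj_support p').tail
  have hTeq : T = p'.tail.support := (SimpleGraph.Walk.support_tail_of_not_nil p' hp'.1.not_nil).symm
  have hTlast : T.getLast? = some x2s := by
    rw [hTeq, List.getLast?_eq_getLast (SimpleGraph.Walk.support_ne_nil _)]
    simp
  set Lr : List V := (T.map Subtype.val).reverse with hLr
  have hLrnd : Lr.Nodup := List.nodup_reverse.mpr (hTnd.map Subtype.val_injective)
  have hLrch : Lr.Chain' G.Adj := by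
    show (List.reverse (T.map Subtype.val)).IsChain G.Adj
    rw [List.isChain_reverse]
    refine List.isChain_map_of_isChain _ ?_ hchT
    intro u v huv
    exact (by simpa using huv : G.Adj ↑u ↑v).symm
  have hLrmem : ∀ v : V, v ∈ Lr ↔ v ∈ S := by
    intro v
    constructor
    · intro hv
      simp only [hLr, List.mem_reverse, List.mem_map] at hv
      obtain ⟨u, _, rfl⟩ := hv
      exact u.2
    · intro hv
      simp only [hLr, List.mem_reverse, List.mem_map]
      exact ⟨⟨v, hv⟩, hTmem _, rfl⟩
  have hLrhead : Lr.head? = some x2 := by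
    rw [hLr, List.head?_reverse, List.getLast?_map, hTlast]
    rfl
  -- split Lr at the X-vertices
  obtain ⟨Ls, h1, h2, h3, h4, h5⟩ := splitList G W Lr hLrch
  -- head bonus is zero
  have hhb : hbn W Lr = 0 := by
    cases hc : Lr with
    | nil => rfl
    | cons b t =>
      have hb2 : b = x2 := by rw [hc] at hLrhead; simpa using hLrhead
      simp [hbn, hb2, hXW x2 hx2X]
  -- the count bound
  have hcnt : Lr.countP (fun v => decide (v ∉ W)) ≤ X.ncard - 1 := by
    have hfin : (X \ {x0}).Finite := Set.toFinite _
    have hfnd : (Lr.filter (fun v => decide (v ∉ W))).Nodup := hLrnd.filter _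
    have hsub : ∀ v ∈ (Lr.filter (fun v => decide (v ∉ W))).toFinset, v ∈ hfin.toFinset := by
      intro v hv
      rw [List.mem_toFinset, List.mem_filter] at hv
      have hvS : v ∈ S := (hLrmem v).mp hv.1
      have hvW : v ∉ W := by simpa using hv.2
      rw [Set.Finite.mem_toFinset]
      exact ⟨hWX v hvW, by simpa using hvS.1⟩
    calc Lr.countP (fun v => decide (v ∉ W))
        = (Lr.filter (fun v => decide (v ∉ W))).length := List.countP_eq_length_filter
      _ = (Lr.filter (fun v => decide (v ∉ W))).toFinset.card :=
          (List.toFinset_card_of_nodup hfnd).symm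
      _ ≤ hfin.toFinset.card := Finset.card_le_card hsub
      _ = (X \ {x0}).ncard := (Set.ncard_eq_toFinset_card _ hfin).symm
      _ = X.ncard - 1 := Set.ncard_diff_singleton_of_mem hx0
  have hLs : Ls.length ≤ X.ncard - 1 := by
    have := h5
    rw [hhb] at this
    omega
  -- assemble the path cover of G[W]
  set LL : List (List ↥W) :=
    [⟨w, hwW⟩] :: Ls.attach.map (fun l => (l.1).attachWith (· ∈ W) (h3 l.1 l.2)) with hLL
  have hmapval : ∀ l : {x // x ∈ Ls},
      ((l.1).attachWith (· ∈ W) (h3 l.1 l.2)).map Subtype.val = l.1 :=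
    fun l => List.attachWith_map_subtype_val _
  have hflat : LL.flatten.map Subtype.val = w :: Ls.flatten := by
    rw [hLL]
    simp only [List.flatten_cons, List.map_append, List.map_flatten, List.map_map]
    have h7 : List.map (List.map Subtype.val ∘ fun l : {x // x ∈ Ls} =>
        (l.1).attachWith (· ∈ W) (h3 l.1 l.2)) Ls.attach = Ls := by
      rw [show (List.map Subtype.val ∘ fun l : {x // x ∈ Ls} =>
        (l.1).attachWith (· ∈ W) (h3 l.1 l.2)) = Subtype.val from funext fun l => hmapval l]
      exact List.attach_map_subtype_val Ls
    rw [h7]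
    simp
  have hwS : w ∉ Lr := fun h => ((hLrmem w).mp h).2 rfl
  have hndWf : (w :: Ls.flatten).Nodup := by
    rw [h4]
    refine List.nodup_cons.mpr ⟨?_, hLrnd.filter _⟩
    intro h
    exact hwS (List.mem_of_mem_filter h)
  have hndLL : LL.flatten.Nodup := by
    apply List.Nodup.of_map Subtype.val
    rw [hflat]
    exact hndWf
  have hcov : ∀ x : ↥W, x ∈ LL.flatten := by
    intro x
    have hx : (x : V) ∈ LL.flatten.map Subtype.val := by
      rw [hflat]
      by_cases hxw : (x : V) = w
      · simp [hxw]
      · refine List.mem_cons_of_mem _ ?_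
        rw [h4, List.mem_filter]
        have hxX : (x : V) ∉ X := fun h => hXW _ h x.2
        refine ⟨(hLrmem _).mpr ⟨?_, hxw⟩, by simpa using x.2⟩
        intro h
        exact hxX (h ▸ hx0)
    obtain ⟨y, hy, hyx⟩ := List.mem_map.mp hx
    exact (Subtype.ext hyx : y = x) ▸ hy
  have hneLL : ∀ l ∈ LL, l ≠ [] := by
    intro l hl
    rw [hLL] at hl
    rcases List.mem_cons.mp hl with rfl | hl
    · simp
    · obtain ⟨l', _, rfl⟩ := List.mem_map.mp hl
      intro h
      apply h1 l'.1 l'.2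
      rw [← hmapval l', h]
      rfl
  have hchLL : ∀ l ∈ LL, l.Chain' (G.induce W).Adj := by
    intro l hl
    rw [hLL] at hl
    rcases List.mem_cons.mp hl with rfl | hl
    · exact List.isChain_singleton _
    · obtain ⟨l', _, rfl⟩ := List.mem_map.mp hl
      have hc : ((l'.1).attachWith (· ∈ W) (h3 l'.1 l'.2)).map Subtype.val = l'.1 := hmapval l'
      have hch' : ((l'.1).attachWith (· ∈ W) (h3 l'.1 l'.2)).map Subtype.val |>.Chain' G.Adj := by
        rw [hc]; exact h2 l'.1 l'.2
      replace hch' := (List.isChain_map Subtype.val).mp hch'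
      refine hch'.imp ?_
      intro a b hab
      simpa using hab
  have hle : pathCoverNumber (G.induce W) ≤ LL.length :=
    pathCoverNumber_le_of_lists (G.induce W) LL hneLL hchLL hndLL hcov
  have hlen : LL.length = Ls.length + 1 := by simp [hLL]
  omega

end K2HypoPaper
end
end

section
/- Let G be a K₂-hamiltonian finite simple graph and (W,X) a non-trivial partition of V(G) such that W is an independent set. Suppose the induced subgraph G[X] contains two adjacent vertices v and w. Let n₁ be the number of vertices of X − v − w joined to exactly one vertex of W and n₂ the number of vertices of X − v − w joined to more than one vertex of W. Then 2n₂ + n₁ ≥ 2|W|. -/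
/- Definitions following "Generation and New Infinite Families of K₂-hypohamiltonian Graphs"
by Goedgebeur, Renders and Zamfirescu. -/

open scoped Classical

noncomputable section

namespace K2HypoPaper

variable {V : Type}

/-- Lemma: type C obstruction. Let `G` be a `K₂`-hamiltonian graph and
`(W, X)` a non-trivial partition of `V(G)` such that `W` is an independent set. Suppose
`G[X]` contains adjacent vertices `v` and `w`. Let `n₁` (resp. `n₂`) be the number of
vertices of `X − v − w` joined to exactly one (resp. more than one) vertex of `W`.
Then `2 n₂ + n₁ ≥ 2 |W|`. -/
theorem typeC_obstruction (V : Type) [Fintype V] (G : SimpleGraph V)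
    (hG : IsK2Hamiltonian G) (W X : Set V)
    (hdisj : Disjoint W X) (hunion : W ∪ X = Set.univ)
    (hWne : W.Nonempty) (hXne : X.Nonempty)
    (hindep : ∀ u ∈ W, ∀ u' ∈ W, ¬ G.Adj u u')
    (v w : V) (hv : v ∈ X) (hw : w ∈ X) (hvw : G.Adj v w) :
    2 * {x ∈ X \ {v, w} | 1 < {y ∈ W | G.Adj x y}.ncard}.ncard
      + {x ∈ X \ {v, w} | {y ∈ W | G.Adj x y}.ncard = 1}.ncard
      ≥ 2 * W.ncard := by
  set S : Set V := {x : V | x ≠ v ∧ x ≠ w} with hS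
  obtain ⟨a, p, hp⟩ := hG v w hvw
  letI : DecidableEq ↥S := fun a b => Classical.propDecidable (a = b)
  -- counting facts about the hamiltonian cycle
  have hcnt_tail : ∀ x : ↥S, p.support.tail.count x = 1 := by
    intro x
    have h := hp.isHamiltonian_tail x
    rw [SimpleGraph.Walk.support_tail_of_not_nil _ hp.isCycle.not_nil] at h
    convert h
  have hcnt_snd : ∀ x : ↥S, (p.darts.map (·.snd)).count x = 1 := by
    intro x; rw [SimpleGraph.Walk.map_snd_darts]; exact hcnt_tail x
  have hcnt_fst : ∀ x : ↥S, (p.darts.map (·.fst)).count x = 1 := by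
    intro x
    have h1 : ((p.darts.map (·.fst)) ++ [a]).count x = ([a] ++ p.support.tail).count x := by
      rw [SimpleGraph.Walk.map_fst_darts_append, List.singleton_append,
        ← SimpleGraph.Walk.support_eq_cons]
    rw [List.count_append, List.count_append] at h1
    have h2 := hcnt_tail x
    omega
  -- existence of darts with given endpoints
  have exFst : ∀ x : ↥S, ∃ d, d ∈ p.darts ∧ d.fst = x := by
    intro x
    have : x ∈ p.darts.map (·.fst) := by
      rw [← List.count_pos_iff, hcnt_fst x]; norm_num
    simpa using this
  have exSnd : ∀ x : ↥S, ∃ d, d ∈ p.darts ∧ d.snd = x := by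
    intro x
    have : x ∈ p.darts.map (·.snd) := by
      rw [← List.count_pos_iff, hcnt_snd x]; norm_num
    simpa using this
  -- uniqueness
  have injFst : ∀ d₁ ∈ p.darts, ∀ d₂ ∈ p.darts, d₁.fst = d₂.fst → d₁ = d₂ := by
    have nd : (p.darts.map (·.fst)).Nodup :=
      List.nodup_iff_count_le_one.mpr (fun x => le_of_eq (hcnt_fst x))
    exact fun d₁ h₁ d₂ h₂ h => List.inj_on_of_nodup_map nd h₁ h₂ h
  have injSnd : ∀ d₁ ∈ p.darts, ∀ d₂ ∈ p.darts, d₁.snd = d₂.snd → d₁ = d₂ := by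
    have nd : (p.darts.map (·.snd)).Nodup :=
      List.nodup_iff_count_le_one.mpr (fun x => le_of_eq (hcnt_snd x))
    exact fun d₁ h₁ d₂ h₂ h => List.inj_on_of_nodup_map nd h₁ h₂ h
  have injE : ∀ d₁ ∈ p.darts, ∀ d₂ ∈ p.darts, d₁.edge = d₂.edge → d₁ = d₂ := by
    have nd : (p.darts.map SimpleGraph.Dart.edge).Nodup := hp.isCycle.edges_nodup
    exact fun d₁ h₁ d₂ h₂ h => List.inj_on_of_nodup_map nd h₁ h₂ h
  choose dF hdF hdFx using exFst
  choose dP hdP hdPx using exSnd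
  -- successor and predecessor functions
  set nxt : V → V := fun u => if h : u ∈ S then ((dF ⟨u, h⟩).snd : V) else u with hnxt
  set prv : V → V := fun u => if h : u ∈ S then ((dP ⟨u, h⟩).fst : V) else u with hprv
  have adj_nxt : ∀ u (h : u ∈ S), G.Adj u (nxt u) := by
    intro u h
    have := (dF ⟨u, h⟩).adj
    rw [hdFx ⟨u, h⟩] at this
    simp only [hnxt, dif_pos h]
    simpa using this
  have adj_prv : ∀ u (h : u ∈ S), G.Adj (prv u) u := by
    intro u h
    have := (dP ⟨u, h⟩).adj
    rw [hdPx ⟨u, h⟩] at this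
    simp only [hprv, dif_pos h]
    simpa using this
  have nxt_mem : ∀ u, u ∈ S → nxt u ∈ S := by
    intro u h; simp only [hnxt, dif_pos h]; exact ((dF ⟨u, h⟩).snd).2
  have prv_mem : ∀ u, u ∈ S → prv u ∈ S := by
    intro u h; simp only [hprv, dif_pos h]; exact ((dP ⟨u, h⟩).fst).2
  have nxt_inj : ∀ u ∈ S, ∀ u' ∈ S, nxt u = nxt u' → u = u' := by
    intro u h u' h' he
    simp only [hnxt, dif_pos h, dif_pos h'] at he
    have hd : dF ⟨u, h⟩ = dF ⟨u', h'⟩ :=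
      injSnd _ (hdF _) _ (hdF _) (Subtype.coe_injective he)
    have h3 : (⟨u, h⟩ : ↥S) = ⟨u', h'⟩ := by
      rw [← hdFx ⟨u, h⟩, ← hdFx ⟨u', h'⟩, hd]
    exact congrArg Subtype.val h3
  have prv_inj : ∀ u ∈ S, ∀ u' ∈ S, prv u = prv u' → u = u' := by
    intro u h u' h' he
    simp only [hprv, dif_pos h, dif_pos h'] at he
    have hd : dP ⟨u, h⟩ = dP ⟨u', h'⟩ :=
      injFst _ (hdP _) _ (hdP _) (Subtype.coe_injective he)
    have h3 : (⟨u, h⟩ : ↥S) = ⟨u', h'⟩ := by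
      rw [← hdPx ⟨u, h⟩, ← hdPx ⟨u', h'⟩, hd]
    exact congrArg Subtype.val h3
  have nxt_ne_prv : ∀ u ∈ S, nxt u ≠ prv u := by
    intro u h he
    simp only [hnxt, hprv, dif_pos h] at he
    have he' : (dF ⟨u, h⟩).snd = (dP ⟨u, h⟩).fst := Subtype.coe_injective he
    have hedge : (dF ⟨u, h⟩).edge = (dP ⟨u, h⟩).edge := by
      rw [SimpleGraph.Dart.edge, SimpleGraph.Dart.edge]
      have h1 : (dF ⟨u, h⟩).toProd = ((⟨u, h⟩ : ↥S), (dF ⟨u, h⟩).snd) :=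
        Prod.ext (hdFx _) rfl
      have h2 : (dP ⟨u, h⟩).toProd = ((dP ⟨u, h⟩).fst, (⟨u, h⟩ : ↥S)) :=
        Prod.ext rfl (hdPx _)
      rw [h1, h2, he']
      exact Sym2.eq_swap
    have hd : dF ⟨u, h⟩ = dP ⟨u, h⟩ := injE _ (hdF _) _ (hdP _) hedge
    have hadj := (dF ⟨u, h⟩).adj
    rw [hdFx, he', ← hd, hdFx] at hadj
    exact (SimpleGraph.irrefl _ hadj)
  -- now the double counting
  have hWS : ∀ u ∈ W, u ∈ S := by
    intro u hu
    refine ⟨fun h => ?_, fun h => ?_⟩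
    · exact (Set.disjoint_left.mp hdisj hu) (h ▸ hv)
    · exact (Set.disjoint_left.mp hdisj hu) (h ▸ hw)
  set Wf : Finset V := W.toFinset with hWf
  set Af : Finset V := (X \ {v, w}).toFinset with hAf
  set f : V × Bool → V := fun z => if z.2 then nxt z.1 else prv z.1 with hf
  set T : Finset (V × Bool) := Wf ×ˢ (Finset.univ : Finset Bool) with hT
  have hmemT : ∀ z : V × Bool, z ∈ T ↔ z.1 ∈ W := by
    intro z; simp [hT, hWf, Set.mem_toFinset]
  have hadjf : ∀ z : V × Bool, z.1 ∈ S → G.Adj z.1 (f z) ∧ f z ∈ S := by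
    intro z hz
    rcases z with ⟨u, b⟩
    cases b
    · exact ⟨(adj_prv u hz).symm, prv_mem u hz⟩
    · exact ⟨adj_nxt u hz, nxt_mem u hz⟩
  have hmaps : ∀ z ∈ T, f z ∈ Af := by
    intro z hz
    have huW : z.1 ∈ W := (hmemT z).mp hz
    have huS : z.1 ∈ S := hWS _ huW
    obtain ⟨hadj, hfS⟩ := hadjf z huS
    have hfnW : f z ∉ W := fun hfW => hindep _ huW _ hfW hadj
    have hfX : f z ∈ X := by
      have : f z ∈ W ∪ X := hunion ▸ Set.mem_univ _
      rcases this with h | h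
      · exact absurd h hfnW
      · exact h
    rw [hAf, Set.mem_toFinset]
    exact ⟨hfX, by simp only [Set.mem_insert_iff, Set.mem_singleton_iff]; push_neg; exact ⟨hfS.1, hfS.2⟩⟩
  have hsame : ∀ x : V, ∀ z₁ ∈ T.filter (fun z => f z = x), ∀ z₂ ∈ T.filter (fun z => f z = x),
      z₁.2 = z₂.2 → z₁ = z₂ := by
    intro x z₁ h₁ z₂ h₂ hb
    obtain ⟨h₁T, h₁f⟩ := Finset.mem_filter.mp h₁
    obtain ⟨h₂T, h₂f⟩ := Finset.mem_filter.mp h₂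
    have h₁S : z₁.1 ∈ S := hWS _ ((hmemT z₁).mp h₁T)
    have h₂S : z₂.1 ∈ S := hWS _ ((hmemT z₂).mp h₂T)
    have : z₁.1 = z₂.1 := by
      cases hb2 : z₂.2
      · rw [hb2] at hb
        simp only [hf, hb, hb2, if_false, Bool.false_eq_true, if_neg] at h₁f h₂f
        exact prv_inj _ h₁S _ h₂S (h₁f.trans h₂f.symm)
      · rw [hb2] at hb
        simp only [hf, hb, hb2, if_true] at h₁f h₂f
        exact nxt_inj _ h₁S _ h₂S (h₁f.trans h₂f.symm)
    exact Prod.ext this (hb.trans rfl)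
  have hdistinct : ∀ x : V, ∀ z₁ ∈ T.filter (fun z => f z = x), ∀ z₂ ∈ T.filter (fun z => f z = x),
      z₁.2 = true → z₂.2 = false → 1 < {y ∈ W | G.Adj x y}.ncard := by
    intro x z₁ h₁ z₂ h₂ hb₁ hb₂
    obtain ⟨h₁T, h₁f⟩ := Finset.mem_filter.mp h₁
    obtain ⟨h₂T, h₂f⟩ := Finset.mem_filter.mp h₂
    have h₁W : z₁.1 ∈ W := (hmemT z₁).mp h₁T
    have h₂W : z₂.1 ∈ W := (hmemT z₂).mp h₂T
    have h₁S : z₁.1 ∈ S := hWS _ h₁W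
    have h₂S : z₂.1 ∈ S := hWS _ h₂W
    simp only [hf, hb₁, hb₂, if_true, Bool.false_eq_true, if_false] at h₁f h₂f
    -- h₁f : nxt z₁.1 = x, h₂f : prv z₂.1 = x
    have hne : z₁.1 ≠ z₂.1 := by
      intro h
      exact nxt_ne_prv _ h₁S (by rw [h₁f, h]; exact h₂f.symm)
    have ha₁ : G.Adj x z₁.1 := by
      have := adj_nxt _ h₁S; rw [h₁f] at this; exact this.symm
    have ha₂ : G.Adj x z₂.1 := by
      have := adj_prv _ h₂S; rw [h₂f] at this; exact this
    rw [Set.one_lt_ncard (Set.toFinite _)]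
    exact ⟨z₁.1, ⟨h₁W, ha₁⟩, z₂.1, ⟨h₂W, ha₂⟩, hne⟩
  have hbound : ∀ x ∈ Af, (T.filter (fun z => f z = x)).card ≤
      (if 1 < {y ∈ W | G.Adj x y}.ncard then 2 else 0)
        + (if {y ∈ W | G.Adj x y}.ncard = 1 then 1 else 0) := by
    intro x hx
    by_cases hlt : 1 < {y ∈ W | G.Adj x y}.ncard
    · rw [if_pos hlt]
      have h2 : (T.filter (fun z => f z = x)).card ≤ (Finset.univ : Finset Bool).card := by
        apply Finset.card_le_card_of_injOn (fun z => z.2) (fun _ _ => Finset.mem_univ _)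
        intro z₁ h₁ z₂ h₂ hb
        exact hsame x z₁ h₁ z₂ h₂ hb
      simp only [Finset.card_univ, Fintype.card_bool] at h2
      omega
    · rw [if_neg hlt]
      rcases Finset.eq_empty_or_nonempty (T.filter (fun z => f z = x)) with hE | ⟨z₀, hz₀⟩
      · simp [hE]
      · obtain ⟨hz₀T, hz₀f⟩ := Finset.mem_filter.mp hz₀
        have hu₀W : z₀.1 ∈ W := (hmemT z₀).mp hz₀T
        have hu₀S : z₀.1 ∈ S := hWS _ hu₀W
        have hadj₀ : G.Adj x z₀.1 := by
          have := (hadjf z₀ hu₀S).1; rw [hz₀f] at this; exact this.symm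
        have hpos : 0 < {y ∈ W | G.Adj x y}.ncard := by
          rw [Set.ncard_pos (Set.toFinite _)]
          exact ⟨z₀.1, hu₀W, hadj₀⟩
        have h1 : {y ∈ W | G.Adj x y}.ncard = 1 := by omega
        rw [if_pos h1]
        have hle1 : (T.filter (fun z => f z = x)).card ≤ 1 := by
          apply Finset.card_le_one.mpr
          intro z₁ h₁ z₂ h₂
          by_cases hb : z₁.2 = z₂.2
          · exact hsame x z₁ h₁ z₂ h₂ hb
          · exfalso
            cases hb₁ : z₁.2 <;> cases hb₂ : z₂.2
            · exact hb (hb₁.trans hb₂.symm)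
            · exact hlt (hdistinct x z₂ h₂ z₁ h₁ hb₂ hb₁)
            · exact hlt (hdistinct x z₁ h₁ z₂ h₂ hb₁ hb₂)
            · exact hb (hb₁.trans hb₂.symm)
        omega
  -- assemble
  have hcard : 2 * W.ncard = T.card := by
    rw [hT, Finset.card_product, Finset.card_univ, Fintype.card_bool,
      hWf, Set.ncard_eq_toFinset_card']
    ring
  have hsum : T.card = ∑ x ∈ Af, (T.filter (fun z => f z = x)).card :=
    Finset.card_eq_sum_card_fiberwise hmaps
  have htotal : T.card ≤
      2 * (Af.filter (fun x => 1 < {y ∈ W | G.Adj x y}.ncard)).card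
        + (Af.filter (fun x => {y ∈ W | G.Adj x y}.ncard = 1)).card := by
    rw [hsum]
    calc ∑ x ∈ Af, (T.filter (fun z => f z = x)).card
        ≤ ∑ x ∈ Af, ((if 1 < {y ∈ W | G.Adj x y}.ncard then 2 else 0)
            + (if {y ∈ W | G.Adj x y}.ncard = 1 then 1 else 0)) :=
          Finset.sum_le_sum hbound
      _ = 2 * (Af.filter (fun x => 1 < {y ∈ W | G.Adj x y}.ncard)).card
            + (Af.filter (fun x => {y ∈ W | G.Adj x y}.ncard = 1)).card := by
          rw [Finset.sum_add_distrib, ← Finset.sum_filter, ← Finset.sum_filter,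
            Finset.sum_const, Finset.sum_const, smul_eq_mul, smul_eq_mul]
          ring
  have hA1 : {x ∈ X \ {v, w} | 1 < {y ∈ W | G.Adj x y}.ncard}.ncard
      = (Af.filter (fun x => 1 < {y ∈ W | G.Adj x y}.ncard)).card := by
    rw [Set.ncard_eq_toFinset_card']
    congr 1
    ext z
    simp [hAf, Set.mem_toFinset]
  have hA2 : {x ∈ X \ {v, w} | {y ∈ W | G.Adj x y}.ncard = 1}.ncard
      = (Af.filter (fun x => {y ∈ W | G.Adj x y}.ncard = 1)).card := by
    rw [Set.ncard_eq_toFinset_card']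
    congr 1
    ext z
    simp [hAf, Set.mem_toFinset]
  rw [ge_iff_le, hA1, hA2, hcard]
  exact htotal.trans (le_refl _)


end K2HypoPaper
end
end

section
/- Let G be a K₂-hypohamiltonian finite simple graph containing a triangle on vertices u, v, w. Then u has at least two neighbours lying outside N[v] ∪ N[w]. -/
/- Definitions following "Generation and New Infinite Families of K₂-hypohamiltonian Graphs"
by Goedgebeur, Renders and Zamfirescu. -/

open scoped Classical

noncomputable section

namespace K2HypoPaper

variable {V : Type}

/-- `N[v]`: the closed neighbourhood of `v` in `G`, i.e. `v` together with all its
neighbours. -/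
def closedNbhd (G : SimpleGraph V) (v : V) : Set V :=
  insert v (G.neighborSet v)


open SimpleGraph in
private lemma hcyc_irrel {α : Type} {inst1 inst2 : DecidableEq α} {G : SimpleGraph α} {x : α}
    {p : G.Walk x x} (h : @SimpleGraph.Walk.IsHamiltonianCycle α inst1 G x p) :
    @SimpleGraph.Walk.IsHamiltonianCycle α inst2 G x p := by
  have : inst2 = inst1 := Subsingleton.elim _ _
  rwa [this]

open SimpleGraph in
private lemma walk_decomp {G : SimpleGraph V} {x y : V} (p : G.Walk x y)
    (hp : ¬ p.Nil) :
    ∃ (a : V) (h : G.Adj x a) (q : G.Walk a y), p = SimpleGraph.Walk.cons h q := by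
  cases p with
  | nil => simp at hp
  | cons h q => exact ⟨_, h, q, rfl⟩

open SimpleGraph in
private lemma ham_reverse {V : Type} [DecidableEq V] {G : SimpleGraph V} {x : V} {p : G.Walk x x}
    (hp : p.IsHamiltonianCycle) : p.reverse.IsHamiltonianCycle := by
  classical
  rw [Walk.isHamiltonianCycle_iff_isCycle_and_support_count_tail_eq_one] at hp ⊢
  obtain ⟨hc, hcount⟩ := hp
  have h1 : p.reverse.support = x :: p.reverse.support.tail := Walk.support_eq_cons _
  have h4 : x :: p.support.tail = (p.reverse.support.tail).reverse ++ [x] := by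
    conv_lhs => rw [← Walk.support_eq_cons]
    rw [← List.reverse_reverse p.support, ← Walk.support_reverse, h1]
    simp
  have key : ∀ y, (p.reverse.support.tail).count y = (p.support.tail).count y := by
    intro y
    have h5 := congrArg (List.count y) h4
    simp only [List.count_cons, List.count_append, List.count_reverse, List.count_singleton,
      List.count_nil] at h5
    split_ifs at h5 <;> omega
  refine ⟨?_, fun y => (key y).trans (hcount y)⟩
  rw [Walk.isCycle_def] at hc ⊢
  refine ⟨Walk.IsTrail.reverse _ hc.1, ?_, ?_⟩
  · intro hnil
    apply hc.2.1
    rw [← Walk.reverse_reverse p, hnil, Walk.reverse_nil]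
  · exact List.nodup_iff_count_le_one.mpr fun y => le_of_eq ((key y).trans (hcount y))

open SimpleGraph in
private lemma helper {G : SimpleGraph V} {S : Set V} {v w : V}
    (hv : v ∉ S) (hw : w ∉ S) (hvw : v ≠ w)
    (hcov : ∀ x : V, x = v ∨ x = w ∨ x ∈ S)
    {u' a : ↥S} (h : (G.induce S).Adj u' a) (q : (G.induce S).Walk a u')
    (hc : (Walk.cons h q).IsHamiltonianCycle)
    (huw : G.Adj ↑u' w) (hwv : G.Adj w v) (hva : G.Adj v ↑a) :
    IsHamiltonianGraph G := by
  classical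
  let f : G.induce S →g G := (SimpleGraph.Embedding.induce S).toHom
  let Q : G.Walk (↑a) (↑u') := q.map f
  have hQsupp : Q.support = q.support.map Subtype.val := by
    show (q.map f).support = _
    rw [Walk.support_map]; rfl
  have hQmem : ∀ x, x ∈ Q.support → x ∈ S := by
    rw [hQsupp]
    rintro x hx
    obtain ⟨y, -, rfl⟩ := List.mem_map.mp hx
    exact y.2
  have hq : ∀ y : ↥S, q.support.count y = 1 := by
    have := (Walk.isHamiltonianCycle_iff_isCycle_and_support_count_tail_eq_one.mp hc).2
    intro y
    have h1 := this y
    simp [Walk.support_cons] at h1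
    convert h1 using 2
    exact lawful_beq_subsingleton _ _
  have hcount : ∀ x : V, (w :: v :: Q.support).count x = 1 := by
    intro x
    rcases hcov x with rfl | rfl | hxS
    · rw [List.count_cons_of_ne hvw.symm, List.count_cons_self,
        List.count_eq_zero_of_not_mem (fun hm => hv (hQmem x hm))]
    · rw [List.count_cons_self, List.count_cons_of_ne hvw,
        List.count_eq_zero_of_not_mem (fun hm => hw (hQmem x hm))]
    · have hxw : x ≠ w := fun hh => hw (hh ▸ hxS)
      have hxv : x ≠ v := fun hh => hv (hh ▸ hxS)
      rw [List.count_cons_of_ne hxw.symm, List.count_cons_of_ne hxv.symm, hQsupp]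
      have hx : x = ((⟨x, hxS⟩ : ↥S) : V) := rfl
      rw [hx, List.count_map_of_injective _ _ Subtype.val_injective]
      exact hq _
  let W : G.Walk (↑u') (↑u') := Walk.cons huw (Walk.cons hwv (Walk.cons hva Q))
  have hWtail : W.support.tail = w :: v :: Q.support := by
    simp [W, Walk.support_cons]
  have hWc : W.IsCycle := by
    rw [show W = Walk.cons huw (Walk.cons hwv (Walk.cons hva Q)) from rfl,
      Walk.cons_isCycle_iff]
    constructor
    · apply Walk.IsPath.mk'
      have hsupp : (Walk.cons hwv (Walk.cons hva Q)).support = w :: v :: Q.support := by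
        simp [Walk.support_cons]
      rw [hsupp, List.nodup_iff_count_le_one]
      exact fun x => (hcount x).le
    · intro hmem
      simp only [Walk.edges_cons, List.mem_cons] at hmem
      rcases hmem with h1 | h1 | h1
      · rcases Sym2.eq_iff.mp h1 with ⟨h2, h3⟩ | ⟨h2, h3⟩
        · exact hvw h3.symm
        · exact hv (h2 ▸ u'.2)
      · rcases Sym2.eq_iff.mp h1 with ⟨h2, h3⟩ | ⟨h2, h3⟩
        · exact hv (h2 ▸ u'.2)
        · exact hvw h3.symm
      · exact hw (hQmem w (Walk.snd_mem_support_of_mem_edges Q h1))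
  exact ⟨↑u', W, Walk.isHamiltonianCycle_iff_isCycle_and_support_count_tail_eq_one.mpr
    ⟨hWc, fun x => by rw [hWtail]; exact hcount x⟩⟩

/-- triangle obstruction lemma. Let `G` be a `K₂`-hypohamiltonian graph
containing a triangle `uvw`. Then `u` has at least two neighbours not in `N[v] ∪ N[w]`. -/
theorem triangle_obstruction (V : Type) [Fintype V] (G : SimpleGraph V)
    (hG : IsK2Hypohamiltonian G) (u v w : V)
    (huv : G.Adj u v) (hvw : G.Adj v w) (huw : G.Adj u w) :
    2 ≤ (G.neighborSet u \ (closedNbhd G v ∪ closedNbhd G w)).ncard := by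
  classical
  open SimpleGraph in
  obtain ⟨hnh, hk2⟩ := hG
  set S : Set V := {x : V | x ≠ v ∧ x ≠ w} with hSdef
  have hvS : v ∉ S := fun hh => hh.1 rfl
  have hwS : w ∉ S := fun hh => hh.2 rfl
  have hcov : ∀ x : V, x = v ∨ x = w ∨ x ∈ S := by
    intro x
    by_cases h1 : x = v
    · exact Or.inl h1
    by_cases h2 : x = w
    · exact Or.inr (Or.inl h2)
    exact Or.inr (Or.inr ⟨h1, h2⟩)
  obtain ⟨base, p, hp0⟩ := hk2 v w hvw
  have hp : p.IsHamiltonianCycle := hcyc_irrel hp0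
  clear hp0
  have huS : u ∈ S := ⟨G.ne_of_adj huv, G.ne_of_adj huw⟩
  set u' : ↥S := ⟨u, huS⟩ with hu'def
  have hu' : u' ∈ p.support := hp.mem_support u'
  set c := p.rotate _ hu' with hcdef
  have hcH : c.IsHamiltonianCycle := by
    rw [Walk.isHamiltonianCycle_iff_isCycle_and_support_count_tail_eq_one] at hp ⊢
    exact ⟨hp.1.rotate hu',
      fun x => by
        have h1 := ((Walk.support_rotate p _ hu').perm.count_eq x).trans
          (show List.count x p.support.tail = 1 by
            convert hp.2 x using 2; exact lawful_beq_subsingleton _ _)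
        convert h1 using 2; exact lawful_beq_subsingleton _ _⟩
  obtain ⟨a, ha, q, hq⟩ := walk_decomp c hcH.not_nil
  have hcH2 : (Walk.cons ha q).IsHamiltonianCycle := hq ▸ hcH
  have hrev : c.reverse.IsHamiltonianCycle := ham_reverse hcH
  obtain ⟨b, hb, q2, hq2⟩ := walk_decomp c.reverse hrev.not_nil
  have hrev2 : (Walk.cons hb q2).IsHamiltonianCycle := hq2 ▸ hrev
  -- adjacency in G
  have hGua : G.Adj u ↑a := ha
  have hGub : G.Adj u ↑b := hb
  -- a and b are outside the closed neighbourhoods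
  have hA : ∀ (z : ↥S) (hz : (G.induce S).Adj u' z) (qq : (G.induce S).Walk z u')
      (hcz : (Walk.cons hz qq).IsHamiltonianCycle),
      (↑z : V) ∉ closedNbhd G v ∪ closedNbhd G w := by
    rintro z hz qq hcz (hx | hx)
    · rcases Set.mem_insert_iff.mp hx with h1 | h1
      · exact z.2.1 h1
      · exact hnh (helper hvS hwS (G.ne_of_adj hvw) hcov hz qq hcz huw hvw.symm h1)
    · rcases Set.mem_insert_iff.mp hx with h1 | h1
      · exact z.2.2 h1
      · have hcov' : ∀ x : V, x = w ∨ x = v ∨ x ∈ S := by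
          intro x; rcases hcov x with h | h | h
          · exact Or.inr (Or.inl h)
          · exact Or.inl h
          · exact Or.inr (Or.inr h)
        exact hnh (helper hwS hvS (G.ne_of_adj hvw).symm hcov' hz qq hcz huv hvw h1)
  have hAa := hA a ha q hcH2
  have hAb := hA b hb q2 hrev2
  -- a ≠ b
  have hlen : 3 ≤ c.length := hcH.isCycle.three_le_length
  have hqe : q.edges ≠ [] := by
    intro hh
    have h0 : q.length = 0 := by
      rw [← Walk.length_edges, hh]; rfl
    have : c.length = 1 := by rw [hq, Walk.length_cons, h0]
    omega
  have hedges1 : c.edges = s(↑u', a) :: q.edges := by rw [hq, Walk.edges_cons]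
  have hedges2 : s(↑u', b) :: q2.edges = q.edges.reverse ++ [s(↑u', a)] := by
    rw [← Walk.edges_cons hb, ← hq2, Walk.edges_reverse, hedges1]
    simp
  have hmemb : s(↑u', b) ∈ q.edges := by
    obtain ⟨e, t, het⟩ : ∃ e t, q.edges.reverse = e :: t := by
      cases hrv : q.edges.reverse with
      | nil => exact absurd (by simpa using hrv) hqe
      | cons e t => exact ⟨e, t, rfl⟩
    rw [het, List.cons_append] at hedges2
    have he : s(↑u', b) = e := by injection hedges2
    rw [he, ← List.mem_reverse, het]
    exact List.mem_cons_self
  have hab : a ≠ b := by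
    intro hEq
    have htrail := hcH2.isCycle.isCircuit.isTrail
    rw [Walk.isTrail_cons] at htrail
    exact htrail.2 (hEq ▸ hmemb)
  -- conclude
  have hsub : {(↑a : V), (↑b : V)} ⊆ G.neighborSet u \ (closedNbhd G v ∪ closedNbhd G w) := by
    rintro x (rfl | rfl)
    · exact ⟨hGua, hAa⟩
    · exact ⟨hGub, hAb⟩
  calc (2 : ℕ) = ({(↑a : V), (↑b : V)} : Set V).ncard :=
        (Set.ncard_pair (fun hh => hab (Subtype.val_injective hh))).symm
    _ ≤ _ := Set.ncard_le_ncard hsub (Set.toFinite _)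

end K2HypoPaper
end
end

section
/- Let G be a K₂-hypohamiltonian finite simple graph. Then every vertex lying on a triangle of G has degree at least 4 in G. -/
/- Definitions following "Generation and New Infinite Families of K₂-hypohamiltonian Graphs"
by Goedgebeur, Renders and Zamfirescu. -/

open scoped Classical

noncomputable section

namespace K2HypoPaper

variable {V : Type}

lemma two_neighbors_of_cycle {W : Type} {H : SimpleGraph W} {x : W} {q : H.Walk x x}
    (hq : q.IsCycle) : ∃ a b, a ≠ b ∧ H.Adj x a ∧ H.Adj x b := by
  have hnil : ¬ q.Nil := hq.not_nil
  have hnil' : ¬ q.reverse.Nil := by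
    rw [SimpleGraph.Walk.nil_iff_length_eq] at *
    simpa using hnil
  refine ⟨q.getVert 1, q.reverse.getVert 1, ?_, q.adj_snd hnil,
    q.reverse.adj_snd hnil'⟩
  intro hbc
  obtain ⟨T, hT⟩ : ∃ T, q.edges = s(x, q.getVert 1) :: T :=
    ⟨q.tail.edges, by
      conv_lhs => rw [← q.cons_tail_eq hnil]
      simp⟩
  obtain ⟨T', hT'⟩ : ∃ T', q.edges.reverse = s(x, q.reverse.getVert 1) :: T' :=
    ⟨q.reverse.tail.edges, by
      rw [← SimpleGraph.Walk.edges_reverse]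
      conv_lhs => rw [← q.reverse.cons_tail_eq hnil']
      simp⟩
  have hnodup := hq.edges_nodup
  rw [hT] at hnodup
  have hTne : T ≠ [] := by
    have h3 := hq.three_le_length
    have hlen : q.edges.length = q.length := q.length_edges
    rw [hT] at hlen
    simp only [List.length_cons] at hlen
    intro h; rw [h] at hlen; simp at hlen; omega
  have hlast : q.edges.getLast? = some (s(x, q.getVert 1)) := by
    rw [List.getLast?_eq_head?_reverse, hT', ← hbc]
    rfl
  rw [hT] at hlast
  obtain ⟨t, ts, rfl⟩ : ∃ t ts, T = t :: ts := by
    cases T with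
    | nil => exact absurd rfl hTne
    | cons t ts => exact ⟨t, ts, rfl⟩
  rw [List.getLast?_cons_cons] at hlast
  have hmem : s(x, q.getVert 1) ∈ t :: ts := List.mem_of_getLast? hlast
  simp only [List.nodup_cons] at hnodup
  exact hnodup.1 hmem

lemma deg_four_aux [Fintype V] {G : SimpleGraph V} (hG : IsK2Hamiltonian G) {u v w : V}
    (huv : G.Adj u v) (huw : G.Adj u w) (hvw : G.Adj v w) :
    4 ≤ (G.neighborSet u).ncard := by
  obtain ⟨c, p, hp⟩ := hG v w hvw
  have hu : u ∈ {x : V | x ≠ v ∧ x ≠ w} := ⟨huv.ne, huw.ne⟩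
  set u' : {x : V | x ≠ v ∧ x ≠ w} := ⟨u, hu⟩ with hu'
  have hmem : u' ∈ p.support :=
    @SimpleGraph.Walk.IsHamiltonianCycle.mem_support _ (fun a b => Classical.propDecidable _)
      _ _ _ hp u'
  have hq := SimpleGraph.Walk.IsCycle.rotate hmem
    (@SimpleGraph.Walk.IsHamiltonianCycle.toIsCycle _ (fun a b => Classical.propDecidable _)
      _ _ _ hp)
  obtain ⟨a, b, hab, ha, hb⟩ := two_neighbors_of_cycle hq
  have ha' : G.Adj u ↑a := by simpa [hu'] using ha
  have hb' : G.Adj u ↑b := by simpa [hu'] using hb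
  have hab' : (↑a : V) ≠ ↑b := fun h => hab (Subtype.coe_injective h)
  have hsub : {v, w, (↑a : V), ↑b} ⊆ G.neighborSet u := by
    intro x hx
    simp only [Set.mem_insert_iff, Set.mem_singleton_iff] at hx
    rcases hx with rfl | rfl | rfl | rfl
    · exact huv
    · exact huw
    · exact ha'
    · exact hb'
  have hcard : ({v, w, (↑a : V), ↑b} : Set V).ncard = 4 := by
    rw [Set.ncard_insert_of_notMem (by simp [hvw.ne, a.2.1, b.2.1, Ne.symm]) (Set.toFinite _),
      Set.ncard_insert_of_notMem (by simp [a.2.2, b.2.2, Ne.symm]) (Set.toFinite _),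
      Set.ncard_insert_of_notMem (by simpa using hab'), Set.ncard_singleton]
  calc 4 = ({v, w, (↑a : V), ↑b} : Set V).ncard := hcard.symm
    _ ≤ (G.neighborSet u).ncard := Set.ncard_le_ncard hsub (Set.toFinite _)

/-- Corollary. In a `K₂`-hypohamiltonian graph, the vertices of a
triangle have degree at least `4`. -/
theorem triangle_degree (V : Type) [Fintype V] (G : SimpleGraph V)
    (hG : IsK2Hypohamiltonian G) (u v w : V)
    (huv : G.Adj u v) (hvw : G.Adj v w) (huw : G.Adj u w) :
    4 ≤ (G.neighborSet u).ncard ∧ 4 ≤ (G.neighborSet v).ncard ∧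
      4 ≤ (G.neighborSet w).ncard := by
  exact ⟨deg_four_aux hG.2 huv huw hvw,
    deg_four_aux hG.2 huv.symm hvw huw,
    deg_four_aux hG.2 hvw.symm huw.symm huv.symm⟩


end K2HypoPaper
end
end

section
/- Let G be a K₂-hypohamiltonian finite simple graph. Then every vertex lying on a 4-cycle of G has degree at least 4 in G. -/
/- Definitions following "Generation and New Infinite Families of K₂-hypohamiltonian Graphs"
by Goedgebeur, Renders and Zamfirescu. -/

open scoped Classical

noncomputable section

namespace K2HypoPaper

variable {V : Type}

section Helpers

open SimpleGraph Walk

/-- Transport a hamiltonian cycle along a change of `DecidableEq` instances. -/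
lemma hamCast {W : Type} {i1 i2 : DecidableEq W} {G : SimpleGraph W} {a : W} {p : G.Walk a a}
    (h : @SimpleGraph.Walk.IsHamiltonianCycle W i1 G a p) :
    @SimpleGraph.Walk.IsHamiltonianCycle W i2 G a p := by
  rwa [Subsingleton.elim i2 i1]

variable {W : Type} [DecidableEq W] {G : SimpleGraph W} {a : W}

lemma count_support_tail_eq_one {p : G.Walk a a} (hp : p.IsHamiltonianCycle) (b : W) :
    p.support.tail.count b = 1 := by
  have := hp.isHamiltonian_tail b
  rwa [Walk.support_tail_of_not_nil p hp.isCycle.not_nil] at this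

lemma isHamCycle_of_counts {p : G.Walk a a} (hc : p.IsCycle)
    (h : ∀ b, p.support.tail.count b = 1) : p.IsHamiltonianCycle := by
  rw [Walk.isHamiltonianCycle_iff_isCycle_and_support_count_tail_eq_one]
  exact ⟨hc, h⟩

lemma count_tail_reverse (p : G.Walk a a) (b : W) :
    p.reverse.support.tail.count b = p.support.tail.count b := by
  have h1 := Walk.support_eq_cons p
  have h2 := Walk.support_eq_cons p.reverse
  have h3 : p.reverse.support.count b = p.support.count b := by
    rw [Walk.support_reverse, List.count_reverse]
  rw [h1, h2] at h3
  by_cases hb : b = a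
  · subst hb
    rw [List.count_cons_self, List.count_cons_self] at h3
    omega
  · rwa [List.count_cons_of_ne (Ne.symm hb), List.count_cons_of_ne (Ne.symm hb)] at h3

lemma hamCycle_reverse {p : G.Walk a a} (hp : p.IsHamiltonianCycle) :
    p.reverse.IsHamiltonianCycle := by
  have hcyc : p.reverse.IsCycle := by
    refine ⟨⟨Walk.IsTrail.reverse _ hp.isCycle.isCircuit.isTrail, ?_⟩, ?_⟩
    · intro h
      have := congrArg Walk.reverse h
      simp only [Walk.reverse_reverse, Walk.reverse_nil] at this
      exact hp.isCycle.ne_nil this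
    · rw [List.nodup_iff_count_le_one]
      intro b
      rw [count_tail_reverse, count_support_tail_eq_one hp]
  exact isHamCycle_of_counts hcyc (fun b => by
    rw [count_tail_reverse, count_support_tail_eq_one hp])

lemma hamCycle_rotate {p : G.Walk a a} (hp : p.IsHamiltonianCycle) {b : W}
    (hb : b ∈ p.support) : (p.rotate b hb).IsHamiltonianCycle := by
  refine isHamCycle_of_counts (hp.isCycle.rotate hb) (fun c => ?_)
  rw [(Walk.support_rotate p b hb).perm.count_eq, count_support_tail_eq_one hp]

lemma ham_mem_support {p : G.Walk a a} (hp : p.IsHamiltonianCycle) (b : W) :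
    b ∈ p.support := hp.mem_support b

lemma exists_cons (r : G.Walk a a) (hne : ¬ r.Nil) :
    ∃ (b : W) (hb : G.Adj a b) (r₁ : G.Walk b a), r = Walk.cons hb r₁ := by
  cases r with
  | nil => simp at hne
  | cons hb r₁ => exact ⟨_, hb, r₁, rfl⟩

end Helpers

open SimpleGraph Walk

/-- Given a hamiltonian cycle of `G - v - w` starting with the edge `u–x`, and a path
`u–v–w–x` in `G`, one obtains a hamiltonian cycle of `G`. -/
lemma build_hamiltonian {G : SimpleGraph V} {u v w x : V}
    (huw : u ≠ w) (hux : u ≠ x) (hvx : v ≠ x) (hvw : v ≠ w)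
    (auv : G.Adj u v) (avw : G.Adj v w) (awx : G.Adj w x)
    {u' x' : ({z : V | z ≠ v ∧ z ≠ w} : Set V)}
    (hu' : u'.val = u) (hx' : x'.val = x)
    (h : (G.induce {z : V | z ≠ v ∧ z ≠ w}).Adj u' x')
    (r : (G.induce {z : V | z ≠ v ∧ z ≠ w}).Walk x' u')
    (hr : (Walk.cons h r).IsHamiltonianCycle) :
    IsHamiltonianGraph G := by
  subst hu' hx'
  set S : Set V := {z : V | z ≠ v ∧ z ≠ w} with hS
  let f : G.induce S →g G := ⟨Subtype.val, fun {a b} hab => hab⟩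
  have hcoe : ⇑f = Subtype.val := rfl
  have hfinj : Function.Injective f := by rw [hcoe]; exact Subtype.val_injective
  obtain ⟨hpath, hedge⟩ := (Walk.cons_isCycle_iff r h).mp hr.isCycle
  have htail : ∀ s : S, r.support.count s = 1 := by
    intro s
    have := hr.isHamiltonian_tail s
    rw [Walk.tail_cons] at this
    simp at this
    convert this using 2
    exact lawful_beq_subsingleton _ _
  have hPsupp : (r.map f).support = r.support.map Subtype.val := by
    rw [Walk.support_map, hcoe]
  have hvnot : v ∉ (r.map f).support := by
    rw [hPsupp]
    simp only [List.mem_map]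
    rintro ⟨s, -, hsv⟩
    exact s.2.1 hsv
  have hwnot : w ∉ (r.map f).support := by
    rw [hPsupp]
    simp only [List.mem_map]
    rintro ⟨s, -, hsw⟩
    exact s.2.2 hsw
  have hC : (Walk.cons auv (Walk.cons avw (Walk.cons awx (r.map f)))).IsHamiltonianCycle := by
    apply isHamCycle_of_counts
    · rw [Walk.cons_isCycle_iff]
      constructor
      · rw [Walk.cons_isPath_iff]
        refine ⟨?_, ?_⟩
        · rw [Walk.cons_isPath_iff]
          exact ⟨Walk.map_isPath_of_injective hfinj hpath, hwnot⟩
        · rw [Walk.support_cons]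
          simp only [List.mem_cons]
          rintro (hvw' | hvmem)
          · exact hvw hvw'
          · exact hvnot hvmem
      · simp only [Walk.edges_cons, List.mem_cons]
        push_neg
        refine ⟨?_, ?_, ?_⟩
        · intro heq
          rw [Sym2.eq_iff] at heq
          rcases heq with ⟨-, h2⟩ | ⟨h1, -⟩
          · exact hvw h2
          · exact huw h1
        · intro heq
          rw [Sym2.eq_iff] at heq
          rcases heq with ⟨h1, -⟩ | ⟨h1, -⟩
          · exact huw h1
          · exact hux h1
        · intro hmem
          exact hvnot ((r.map f).snd_mem_support_of_mem_edges hmem)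
    · intro b
      have hsupp : (Walk.cons auv (Walk.cons avw (Walk.cons awx (r.map f)))).support.tail
          = v :: w :: (r.map f).support := by
        simp [Walk.support_cons]
      rw [hsupp]
      by_cases hbv : b = v
      · subst hbv
        rw [List.count_cons_self, List.count_cons_of_ne hvw.symm,
          List.count_eq_zero_of_not_mem hvnot]
      · by_cases hbw : b = w
        · subst hbw
          rw [List.count_cons_of_ne hvw, List.count_cons_self,
            List.count_eq_zero_of_not_mem hwnot]
        · rw [List.count_cons_of_ne (Ne.symm hbv), List.count_cons_of_ne (Ne.symm hbw), hPsupp]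
          have : b = Subtype.val (⟨b, ⟨hbv, hbw⟩⟩ : S) := rfl
          rw [this, List.count_map_of_injective _ _ Subtype.val_injective]
          exact htail _
  exact ⟨_, _, hC⟩

/-- The key step: if `G` is non-hamiltonian, `u v w x` is a `4`-cycle of `G` and
`G - v - w` is hamiltonian, then `u` has at least `4` neighbours. -/
lemma key_lemma [Fintype V] {G : SimpleGraph V}
    (hnh : ¬ IsHamiltonianGraph G) {u v w x : V}
    (huv0 : u ≠ v) (huw : u ≠ w) (hux : u ≠ x) (hvw : v ≠ w) (hvx : v ≠ x) (hwx0 : w ≠ x)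
    (auv : G.Adj u v) (avw : G.Adj v w) (awx : G.Adj w x) (axu : G.Adj x u)
    (hham : IsHamiltonianGraph (G.induce {z : V | z ≠ v ∧ z ≠ w})) :
    4 ≤ (G.neighborSet u).ncard := by
  by_contra hdeg
  push_neg at hdeg
  obtain ⟨a, p, hp⟩ := hham
  set S : Set V := {z : V | z ≠ v ∧ z ≠ w} with hS
  have huS : u ∈ S := ⟨huv0, huw⟩
  have hxS : x ∈ S := ⟨fun hh => hvx hh.symm, fun hh => hwx0 hh.symm⟩
  set u' : S := ⟨u, huS⟩ with hu'def
  have hp' := hamCast (i2 := fun a b => Subtype.instDecidableEq a b) hp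
  have hu : u' ∈ p.support := ham_mem_support hp' u'
  have hr := hamCycle_rotate hp' hu
  obtain ⟨b, hb, r₁, hre⟩ := exists_cons (p.rotate u' hu) hr.isCycle.not_nil
  obtain ⟨c, hc, r₂, hre2⟩ := exists_cons (p.rotate u' hu).reverse
    (hamCycle_reverse hr).isCycle.not_nil
  have hbc : b ≠ c := by
    rintro rfl
    have hnod : (p.rotate u' hu).edges.Nodup := hr.isCycle.isCircuit.isTrail.edges_nodup
    have hlen : 3 ≤ (p.rotate u' hu).edges.length := by
      rw [Walk.length_edges]; exact hr.isCycle.three_le_length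
    have h1 : (p.rotate u' hu).edges = s(u', b) :: r₁.edges := by rw [hre, Walk.edges_cons]
    have h2 : (p.rotate u' hu).edges.reverse = s(u', b) :: r₂.edges := by
      rw [← Walk.edges_reverse, hre2, Walk.edges_cons]
    have h3 : (p.rotate u' hu).edges = r₂.edges.reverse ++ [s(u', b)] := by
      have := congrArg List.reverse h2
      simpa using this
    rw [h1] at h3 hnod hlen
    rcases hc2 : r₂.edges.reverse with - | ⟨e0, t⟩
    · rw [hc2] at h3
      simp only [List.nil_append, List.cons.injEq] at h3
      rw [h3.2] at hlen
      simp at hlen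
    · rw [hc2] at h3
      simp only [List.cons_append, List.cons.injEq] at h3
      have hmem : s(u', b) ∈ r₁.edges := by
        rw [h3.2]
        simp
      exact (List.nodup_cons.mp hnod).1 hmem
  have hub : G.Adj u b.val := hb
  have huc : G.Adj u c.val := hc
  have hmain : x = b.val ∨ x = c.val := by
    by_contra hcon
    push_neg at hcon
    obtain ⟨hxb, hxc⟩ := hcon
    have hsub : ({v, x, b.val, c.val} : Set V) ⊆ G.neighborSet u := by
      intro z hz
      simp only [Set.mem_insert_iff, Set.mem_singleton_iff] at hz
      rcases hz with rfl | rfl | rfl | rfl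
      · exact auv
      · exact axu.symm
      · exact hub
      · exact huc
    have h4 : ({v, x, b.val, c.val} : Set V).ncard = 4 := by
      rw [Set.ncard_insert_of_notMem (by
          simp only [Set.mem_insert_iff, Set.mem_singleton_iff]
          push_neg
          exact ⟨hvx, fun hh => b.2.1 hh.symm, fun hh => c.2.1 hh.symm⟩),
        Set.ncard_insert_of_notMem (by
          simp only [Set.mem_insert_iff, Set.mem_singleton_iff]
          push_neg
          exact ⟨hxb, hxc⟩),
        Set.ncard_insert_of_notMem (by
          simp only [Set.mem_singleton_iff]
          exact fun hh => hbc (Subtype.ext hh)),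
        Set.ncard_singleton]
    have hle := Set.ncard_le_ncard hsub (Set.toFinite _)
    rw [h4] at hle
    omega
  rcases hmain with hxb | hxc
  · have hbx' : b = (⟨x, hxS⟩ : S) := Subtype.ext hxb.symm
    subst hbx'
    rw [hre] at hr
    exact hnh (build_hamiltonian huw hux hvx hvw auv avw awx rfl rfl hb r₁ hr)
  · have hcx' : c = (⟨x, hxS⟩ : S) := Subtype.ext hxc.symm
    subst hcx'
    have hr2 := hamCycle_reverse hr
    rw [hre2] at hr2
    exact hnh (build_hamiltonian huw hux hvx hvw auv avw awx rfl rfl hc r₂ hr2)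

/-- Corollary. In a `K₂`-hypohamiltonian graph, the vertices of a
`4`-cycle have degree at least `4`. -/
theorem fourCycle_degree (V : Type) [Fintype V] (G : SimpleGraph V)
    (hG : IsK2Hypohamiltonian G) (u v w x : V)
    (hdist : u ≠ v ∧ u ≠ w ∧ u ≠ x ∧ v ≠ w ∧ v ≠ x ∧ w ≠ x)
    (huv : G.Adj u v) (hvw : G.Adj v w) (hwx : G.Adj w x) (hxu : G.Adj x u) :
    4 ≤ (G.neighborSet u).ncard ∧ 4 ≤ (G.neighborSet v).ncard ∧
      4 ≤ (G.neighborSet w).ncard ∧ 4 ≤ (G.neighborSet x).ncard := by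
  obtain ⟨huv0, huw0, hux0, hvw0, hvx0, hwx0⟩ := hdist
  obtain ⟨hnh, hK2⟩ := hG
  refine ⟨?_, ?_, ?_, ?_⟩
  · exact key_lemma hnh huv0 huw0 hux0 hvw0 hvx0 hwx0 huv hvw hwx hxu (hK2 v w hvw)
  · exact key_lemma hnh hvw0 hvx0 (fun hh => huv0 hh.symm) hwx0
      (fun hh => huw0 hh.symm) (fun hh => hux0 hh.symm) hvw hwx hxu huv (hK2 w x hwx)
  · exact key_lemma hnh hwx0 (fun hh => huw0 hh.symm) (fun hh => hvw0 hh.symm)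
      (fun hh => hux0 hh.symm) (fun hh => hvx0 hh.symm) huv0 hwx hxu huv hvw (hK2 x u hxu)
  · exact key_lemma hnh (fun hh => hux0 hh.symm) (fun hh => hvx0 hh.symm)
      (fun hh => hwx0 hh.symm) huv0 huw0 hvw0 hxu huv hvw hwx (hK2 u v huv)

end K2HypoPaper
end
end
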